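/- arXiv:1108.5104 — 3 statements merged into one kernel-verified Lean document; each statement's English description precedes it below -/
import Mathlib

section
/- Let C be a nonempty (n,d,w) constant-weight code with d even and d < 2w ≤ n, and let H = {d/2, …, w}. Suppose i ≠ j are in H with m_{i,j} = d. Let P_i, P_j, P_{ij}, P_{ji} be positive integers with P_i ≥ T(i,w,i,n−w,d), P_j ≥ T(j,w,j,n−w,d), P_{ji} ≥ T(w1,n1,w2,n2,d) and P_{ij} ≥ T(w1',n1',w2',n2',d), where w1 = |i+j−w|, n1 = i if w < i+j and n1 = w−i otherwise, w2 = |i+j−(n−w)|, n2 = i if n−w < i+j and n2 = (n−w)−i otherwise, and w1', n1', w2', n2' are defined the same way with the roles of i and j interchanged. Then for each c ∈ C: (1) if P_{ij}/P_i + P_{ji}/P_j ≥ 1, then ((P_j − P_{ji})/(P_j·P_{ij}))·|S_{2i}(c)| + (1/P_j)·|S_{2j}(c)| ≤ 1; (2) if P_{ij}/P_i + P_{ji}/P_j ≥ 1, then (1/P_i)·|S_{2i}(c)| + ((P_i − P_{ij})/(P_i·P_{ji}))·|S_{2j}(c)| ≤ 1; (3) if P_{ij}/P_i + P_{ji}/P_j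 ≤ 1, then (1/P_i)·|S_{2i}(c)| + (1/P_j)·|S_{2j}(c)| ≤ 1. -/
/-- The number of ones of a binary vector. -/
def wtOnes {n : ℕ} (u : Fin n → ZMod 2) : ℕ :=
  (Finset.univ.filter (fun t => u t = 1)).card

/-- `C` is an `(n,d,w)` constant-weight binary code. -/
def IsCWCode (n d w : ℕ) (C : Finset (Fin n → ZMod 2)) : Prop :=
  (∀ c ∈ C, wtOnes c = w) ∧
  ∀ u ∈ C, ∀ v ∈ C, u ≠ v → d ≤ hammingDist u v

/-- `A n d w`: the largest possible size of an `(n,d,w)` constant-weight code. -/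
noncomputable def A (n d w : ℕ) : ℕ :=
  sSup {M | ∃ C : Finset (Fin n → ZMod 2), IsCWCode n d w C ∧ C.card = M}

/-- `C` is a `(w1,n1,w2,n2,d)` doubly-constant-weight binary code. -/
def IsDCWCode (w1 n1 w2 n2 d : ℕ) (C : Finset (Fin n1 ⊕ Fin n2 → ZMod 2)) : Prop :=
  (∀ c ∈ C,
    (Finset.univ.filter (fun t : Fin n1 => c (Sum.inl t) = 1)).card = w1 ∧
    (Finset.univ.filter (fun t : Fin n2 => c (Sum.inr t) = 1)).card = w2) ∧
  ∀ u ∈ C, ∀ v ∈ C, u ≠ v → d ≤ hammingDist u v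

/-- `T w1 n1 w2 n2 d`: the largest possible size of a `(w1,n1,w2,n2,d)`
doubly-constant-weight code. -/
noncomputable def T (w1 n1 w2 n2 d : ℕ) : ℕ :=
  sSup {M | ∃ C : Finset (Fin n1 ⊕ Fin n2 → ZMod 2), IsDCWCode w1 n1 w2 n2 d C ∧ C.card = M}

/-- `S_i(c)`: the set of codewords of `C` at distance `i` from `c`. -/
def Sdist {n : ℕ} (C : Finset (Fin n → ZMod 2)) (c : Fin n → ZMod 2) (i : ℕ) :
    Finset (Fin n → ZMod 2) :=
  C.filter (fun u => hammingDist u c = i)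

/-- The distance distribution `A_i = (1/|C|) ∑_{c ∈ C} |S_i(c)|` of a code `C`. -/
noncomputable def distDistr {n : ℕ} (C : Finset (Fin n → ZMod 2)) (i : ℕ) : ℚ :=
  (∑ c ∈ C, ((Sdist C c i).card : ℚ)) / (C.card : ℚ)

/-- `V_i`: vectors of `F^n` with exactly `i` ones on the first `w` coordinates and
exactly `i` ones on the last `n - w` coordinates. -/
def Vset (n w i : ℕ) : Finset (Fin n → ZMod 2) :=
  Finset.univ.filter (fun u =>
    (Finset.univ.filter (fun t : Fin n => t.val < w ∧ u t = 1)).card = i ∧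
    (Finset.univ.filter (fun t : Fin n => w ≤ t.val ∧ u t = 1)).card = i)

/-- `m_{i,j} = max { d(u,v) : u ∈ V_i, v ∈ V_j }`. -/
def mMax (n w i j : ℕ) : ℕ :=
  ((Vset n w i) ×ˢ (Vset n w j)).sup fun p => hammingDist p.1 p.2

/-- `P⁻_k(n;x) = ∑_{j odd} C(x,j) C(n-x,k-j)`. -/
def Pminus (k n x : ℕ) : ℕ :=
  ∑ j ∈ Finset.range (k + 1), if Odd j then x.choose j * (n - x).choose (k - j) else 0

/-- `P⁺_k(n;x) = ∑_{j even} C(x,j) C(n-x,k-j)`. -/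
def Pplus (k n x : ℕ) : ℕ :=
  ∑ j ∈ Finset.range (k + 1), if Even j then x.choose j * (n - x).choose (k - j) else 0

/-- The Krawtchouk polynomial `P_k(n;x) = ∑_j (-1)^j C(x,j) C(n-x,k-j)` at integer points. -/
def Kraw (k n x : ℕ) : ℤ :=
  ∑ j ∈ Finset.range (k + 1), (-1 : ℤ) ^ j * x.choose j * (n - x).choose (k - j)

open Finset

lemma card_filter_equiv {α β : Type*} [Fintype α] [DecidableEq β] (B : Finset β)
    (e : α ≃ {x // x ∈ B}) {P : β → Prop} [DecidablePred P] {Q : α → Prop} [DecidablePred Q]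
    (h : ∀ t, Q t ↔ P (e t : β)) :
    (Finset.univ.filter Q).card = (B.filter P).card := by
  refine Finset.card_bij' (fun t _ => (e t : β))
    (fun p hp => e.symm ⟨p, (Finset.mem_filter.mp hp).1⟩) ?_ ?_ ?_ ?_
  · intro t ht
    exact Finset.mem_filter.mpr ⟨(e t).2, (h t).mp (Finset.mem_filter.mp ht).2⟩
  · intro p hp
    refine Finset.mem_filter.mpr ⟨Finset.mem_univ _, (h _).mpr ?_⟩
    simpa using (Finset.mem_filter.mp hp).2
  · intro t ht; simp
  · intro p hp; simp

lemma card_filter_sum {α β : Type*} [Fintype α] [Fintype β] [DecidableEq α] [DecidableEq β]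
    (R : α ⊕ β → Prop) [DecidablePred R] :
    (Finset.univ.filter R).card =
      (Finset.univ.filter fun a => R (Sum.inl a)).card +
      (Finset.univ.filter fun b => R (Sum.inr b)).card := by
  rw [← Finset.card_toLeft_add_card_toRight]
  have hl : (Finset.univ.filter R).toLeft = Finset.univ.filter (fun a => R (Sum.inl a)) := by
    ext a; simp
  have hr : (Finset.univ.filter R).toRight = Finset.univ.filter (fun b => R (Sum.inr b)) := by
    ext b; simp
  rw [hl, hr]

lemma le_T {w1 n1 w2 n2 d : ℕ} (D : Finset (Fin n1 ⊕ Fin n2 → ZMod 2))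
    (hD : IsDCWCode w1 n1 w2 n2 d D) : D.card ≤ T w1 n1 w2 n2 d := by
  apply le_csSup
  · refine ⟨Fintype.card (Fin n1 ⊕ Fin n2 → ZMod 2), ?_⟩
    rintro M ⟨E, -, rfl⟩
    simpa using Finset.card_le_univ E
  · exact ⟨D, hD, rfl⟩

lemma restrict_le_T {n : ℕ} (D : Finset (Fin n → ZMod 2)) (B1 B2 : Finset (Fin n))
    (hdisj : ∀ p, p ∈ B1 → p ∉ B2) (g : Fin n → ZMod 2) {w1 n1 w2 n2 d : ℕ}
    (h1 : B1.card = n1) (h2 : B2.card = n2)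
    (hw1 : ∀ u ∈ D, (B1.filter (fun p => u p + g p = 1)).card = w1)
    (hw2 : ∀ u ∈ D, (B2.filter (fun p => u p + g p = 1)).card = w2)
    (hout : ∀ u ∈ D, ∀ u' ∈ D, ∀ p, p ∉ B1 → p ∉ B2 → u p = u' p)
    (hdist : ∀ u ∈ D, ∀ u' ∈ D, u ≠ u' → d ≤ hammingDist u u') :
    D.card ≤ T w1 n1 w2 n2 d := by
  classical
  let e1 : Fin n1 ≃ {x // x ∈ B1} := (finCongr h1.symm).trans B1.equivFin.symm
  let e2 : Fin n2 ≃ {x // x ∈ B2} := (finCongr h2.symm).trans B2.equivFin.symm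
  set Φ : (Fin n → ZMod 2) → (Fin n1 ⊕ Fin n2 → ZMod 2) :=
    fun u => Sum.elim (fun t => u (e1 t) + g (e1 t)) (fun t => u (e2 t) + g (e2 t)) with hΦ
  have hinj : Set.InjOn Φ D := by
    intro u hu u' hu' h
    funext p
    by_cases hp1 : p ∈ B1
    · have := congrFun h (Sum.inl (e1.symm ⟨p, hp1⟩))
      simp only [hΦ, Sum.elim_inl, Equiv.apply_symm_apply] at this
      exact add_right_cancel this
    · by_cases hp2 : p ∈ B2
      · have := congrFun h (Sum.inr (e2.symm ⟨p, hp2⟩))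
        simp only [hΦ, Sum.elim_inr, Equiv.apply_symm_apply] at this
        exact add_right_cancel this
      · exact hout u hu u' hu' p hp1 hp2
  have hdistEq : ∀ u ∈ D, ∀ u' ∈ D, hammingDist (Φ u) (Φ u') = hammingDist u u' := by
    intro u hu u' hu'
    have hsplit : hammingDist (Φ u) (Φ u') =
        (Finset.univ.filter fun t : Fin n1 => Φ u (Sum.inl t) ≠ Φ u' (Sum.inl t)).card +
        (Finset.univ.filter fun t : Fin n2 => Φ u (Sum.inr t) ≠ Φ u' (Sum.inr t)).card :=
      card_filter_sum _
    have h1' : (Finset.univ.filter fun t : Fin n1 => Φ u (Sum.inl t) ≠ Φ u' (Sum.inl t)).card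
        = (B1.filter fun p => u p ≠ u' p).card := by
      refine card_filter_equiv B1 e1 fun t => ?_
      simp only [hΦ, Sum.elim_inl]
      constructor
      · intro h hc; exact h (by rw [hc])
      · intro h hc; exact h (add_right_cancel hc)
    have h2' : (Finset.univ.filter fun t : Fin n2 => Φ u (Sum.inr t) ≠ Φ u' (Sum.inr t)).card
        = (B2.filter fun p => u p ≠ u' p).card := by
      refine card_filter_equiv B2 e2 fun t => ?_
      simp only [hΦ, Sum.elim_inr]
      constructor
      · intro h hc; exact h (by rw [hc])
      · intro h hc; exact h (add_right_cancel hc)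
    have hfull : (Finset.univ.filter fun p => u p ≠ u' p)
        = B1.filter (fun p => u p ≠ u' p) ∪ B2.filter (fun p => u p ≠ u' p) := by
      ext p
      simp only [Finset.mem_filter, Finset.mem_union, Finset.mem_univ, true_and]
      constructor
      · intro h
        by_cases hp1 : p ∈ B1
        · exact Or.inl ⟨hp1, h⟩
        · by_cases hp2 : p ∈ B2
          · exact Or.inr ⟨hp2, h⟩
          · exact absurd (hout u hu u' hu' p hp1 hp2) h
      · rintro (⟨-, h⟩ | ⟨-, h⟩) <;> exact h
    have hdisj' : Disjoint (B1.filter (fun p => u p ≠ u' p)) (B2.filter (fun p => u p ≠ u' p)) := by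
      rw [Finset.disjoint_left]
      intro p hp hq
      exact hdisj p (Finset.mem_filter.mp hp).1 (Finset.mem_filter.mp hq).1
    rw [hsplit, h1', h2']
    show _ = (Finset.univ.filter fun p => u p ≠ u' p).card
    rw [hfull, Finset.card_union_of_disjoint hdisj']
  have himg : IsDCWCode w1 n1 w2 n2 d (D.image Φ) := by
    constructor
    · intro z hz
      obtain ⟨u, hu, rfl⟩ := Finset.mem_image.mp hz
      refine ⟨?_, ?_⟩
      · exact (card_filter_equiv B1 e1 (P := fun p => u p + g p = 1)
          (fun t => Iff.rfl)).trans (hw1 u hu)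
      · exact (card_filter_equiv B2 e2 (P := fun p => u p + g p = 1)
          (fun t => Iff.rfl)).trans (hw2 u hu)
    · intro z hz z' hz' hne
      obtain ⟨u, hu, rfl⟩ := Finset.mem_image.mp hz
      obtain ⟨u', hu', rfl⟩ := Finset.mem_image.mp hz'
      have : u ≠ u' := fun h => hne (by rw [h])
      rw [hdistEq u hu u' hu']
      exact hdist u hu u' hu' this
  calc D.card = (D.image Φ).card := (Finset.card_image_of_injOn hinj).symm
    _ ≤ T w1 n1 w2 n2 d := le_T _ himg

lemma z2a : ∀ a b : ZMod 2, b = 1 → (a + b = 1 ↔ a = 0) := by decide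
lemma z2b : ∀ a b : ZMod 2, ¬ b = 1 → (a + b = 1 ↔ a = 1) := by decide
lemma z2c : ∀ a b : ZMod 2, b = 1 → (¬ a = b ↔ a = 0) := by decide
lemma z2d : ∀ a b : ZMod 2, ¬ b = 1 → (¬ a = b ↔ a = 1) := by decide
lemma z2e : ∀ a : ZMod 2, (¬ a = 1) ↔ a = 0 := by decide
lemma z2f : ∀ a : ZMod 2, (¬ a = 0) ↔ a = 1 := by decide

lemma two_filter_card {α : Type*} [DecidableEq α] (s : Finset α) (q : α → Prop) [DecidablePred q] :
    s.card = (s.filter q).card + (s.filter (fun p => ¬ q p)).card :=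
  (Finset.card_filter_add_card_filter_not _).symm

lemma hammingDist_eq_card {n : ℕ} (u v : Fin n → ZMod 2) :
    hammingDist u v = (Finset.univ.filter (fun p => ¬ u p = v p)).card := rfl

lemma ones_split {n w k : ℕ} {c u : Fin n → ZMod 2} (hcw : wtOnes c = w) (hu : wtOnes u = w)
    (hd : hammingDist u c = 2 * k) :
    ((Finset.univ.filter (fun p : Fin n => c p = 1)).filter (fun p => u p + c p = 1)).card = k ∧
    ((Finset.univ.filter (fun p : Fin n => ¬ c p = 1)).filter (fun p => u p + c p = 1)).card = k := by
  classical
  set s := Finset.univ.filter (fun p : Fin n => c p = 1) with hs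
  set sc := Finset.univ.filter (fun p : Fin n => ¬ c p = 1) with hsc
  have e1 : s.filter (fun p => u p + c p = 1) = s.filter (fun p => u p = 0) :=
    Finset.filter_congr fun p hp => z2a (u p) (c p) (Finset.mem_filter.mp hp).2
  have e2 : sc.filter (fun p => u p + c p = 1) = sc.filter (fun p => u p = 1) :=
    Finset.filter_congr fun p hp => z2b (u p) (c p) (Finset.mem_filter.mp hp).2
  have hscard : s.card = w := hcw
  have h1 : s.card = (s.filter (fun p => u p = 1)).card + (s.filter (fun p => u p = 0)).card := by
    rw [two_filter_card s (fun p => u p = 1)]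
    have : s.filter (fun p => ¬ u p = 1) = s.filter (fun p => u p = 0) :=
      Finset.filter_congr fun p _ => z2e (u p)
    rw [this]
  have hwt : w = (s.filter (fun p => u p = 1)).card + (sc.filter (fun p => u p = 1)).card := by
    rw [← hu]
    show (Finset.univ.filter (fun p => u p = 1)).card = _
    rw [two_filter_card (Finset.univ.filter (fun p => u p = 1)) (fun p => c p = 1)]
    have e3 : (Finset.univ.filter (fun p => u p = 1)).filter (fun p => c p = 1)
        = s.filter (fun p => u p = 1) := by
      ext p; simp only [hs, Finset.mem_filter, Finset.mem_univ, true_and]; tauto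
    have e4 : (Finset.univ.filter (fun p => u p = 1)).filter (fun p => ¬ c p = 1)
        = sc.filter (fun p => u p = 1) := by
      ext p; simp only [hsc, Finset.mem_filter, Finset.mem_univ, true_and]; tauto
    rw [e3, e4]
  have hdist : 2 * k = (s.filter (fun p => u p = 0)).card + (sc.filter (fun p => u p = 1)).card := by
    rw [← hd, hammingDist_eq_card]
    rw [two_filter_card (Finset.univ.filter (fun p => ¬ u p = c p)) (fun p => c p = 1)]
    have e3 : (Finset.univ.filter (fun p => ¬ u p = c p)).filter (fun p => c p = 1)
        = s.filter (fun p => u p = 0) := by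
      ext p
      simp only [hs, Finset.mem_filter, Finset.mem_univ, true_and]
      constructor
      · rintro ⟨h1, h2⟩; exact ⟨h2, (z2c (u p) (c p) h2).mp h1⟩
      · rintro ⟨h1, h2⟩; exact ⟨(z2c (u p) (c p) h1).mpr h2, h1⟩
    have e4 : (Finset.univ.filter (fun p => ¬ u p = c p)).filter (fun p => ¬ c p = 1)
        = sc.filter (fun p => u p = 1) := by
      ext p
      simp only [hsc, Finset.mem_filter, Finset.mem_univ, true_and]
      constructor
      · rintro ⟨h1, h2⟩; exact ⟨h2, (z2d (u p) (c p) h2).mp h1⟩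
      · rintro ⟨h1, h2⟩; exact ⟨(z2d (u p) (c p) h1).mpr h2, h1⟩
    rw [e3, e4]
  rw [e1, e2]
  omega

lemma mem_Sdist {n : ℕ} {C : Finset (Fin n → ZMod 2)} {c u : Fin n → ZMod 2} {k : ℕ} :
    u ∈ Sdist C c k ↔ u ∈ C ∧ hammingDist u c = k := Finset.mem_filter

lemma Sdist_le_T_single {n d w k : ℕ} {C : Finset (Fin n → ZMod 2)} (hcode : IsCWCode n d w C)
    {c : Fin n → ZMod 2} (hc : c ∈ C) :
    (Sdist C c (2 * k)).card ≤ T k w k (n - w) d := by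
  classical
  set s := Finset.univ.filter (fun p : Fin n => c p = 1) with hs
  set sc := Finset.univ.filter (fun p : Fin n => ¬ c p = 1) with hsc
  have hscard : s.card = w := hcode.1 c hc
  have hsccard : sc.card = n - w := by
    have := two_filter_card (Finset.univ : Finset (Fin n)) (fun p => c p = 1)
    simp only [Finset.card_univ, Fintype.card_fin] at this
    rw [← hs, ← hsc] at this
    omega
  refine restrict_le_T _ s sc ?_ c hscard hsccard ?_ ?_ ?_ ?_
  · intro p hp hp'
    exact (Finset.mem_filter.mp hp').2 (Finset.mem_filter.mp hp).2
  · intro u hu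
    obtain ⟨huC, hud⟩ := mem_Sdist.mp hu
    exact (ones_split hscard (hcode.1 u huC) hud).1
  · intro u hu
    obtain ⟨huC, hud⟩ := mem_Sdist.mp hu
    exact (ones_split hscard (hcode.1 u huC) hud).2
  · intro u _ u' _ p hp1 hp2
    exfalso
    by_cases h : c p = 1
    · exact hp1 (Finset.mem_filter.mpr ⟨Finset.mem_univ _, h⟩)
    · exact hp2 (Finset.mem_filter.mpr ⟨Finset.mem_univ _, h⟩)
  · intro u hu u' hu' hne
    exact hcode.2 u (mem_Sdist.mp hu).1 u' (mem_Sdist.mp hu').1 hne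

section Exchange

variable {n : ℕ}

/-- Updating `y` at `q ↦ 0` and `r ↦ 1` (where `y q = 1`, `y r = 0`) preserves the
number of ones within any region containing both `q` and `r`. -/
lemma card_update_filter {y : Fin n → ZMod 2} {q r : Fin n} (hqr : q ≠ r)
    (P : Fin n → Prop) [DecidablePred P] (hPq : P q) (hPr : P r)
    (hyq : y q = 1) (hyr : ¬ y r = 1) :
    (Finset.univ.filter fun p => P p ∧ (Function.update (Function.update y q 0) r 1) p = 1).card
      = (Finset.univ.filter fun p => P p ∧ y p = 1).card := by
  classical
  set y' := Function.update (Function.update y q 0) r 1 with hy'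
  have hy'r : y' r = 1 := by simp [hy']
  have hy'q : y' q = 0 := by
    rw [hy', Function.update_of_ne hqr, Function.update_self]
  have hy'p : ∀ p, p ≠ q → p ≠ r → y' p = y p := by
    intro p h1 h2
    rw [hy', Function.update_of_ne h2, Function.update_of_ne h1]
  have hset : (Finset.univ.filter fun p => P p ∧ y' p = 1)
      = insert r ((Finset.univ.filter fun p => P p ∧ y p = 1).erase q) := by
    ext p
    by_cases h2 : p = r
    · subst h2
      simp [hy'r, hPr]
    · by_cases h1 : p = q
      · subst h1
        simp only [Finset.mem_insert, Finset.mem_erase, Finset.mem_filter, Finset.mem_univ,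
          true_and, hy'q]
        simp [hqr, h2]
      · simp only [Finset.mem_insert, Finset.mem_erase, Finset.mem_filter, Finset.mem_univ,
          true_and, hy'p p h1 h2]
        tauto
  rw [hset]
  have hqmem : q ∈ (Finset.univ.filter fun p => P p ∧ y p = 1) := by
    simp [hPq, hyq]
  have hrmem : r ∉ ((Finset.univ.filter fun p => P p ∧ y p = 1).erase q) := by
    simp [hyr]
  rw [Finset.card_insert_of_notMem hrmem, Finset.card_erase_of_mem hqmem]
  have : 0 < (Finset.univ.filter fun p => P p ∧ y p = 1).card :=
    Finset.card_pos.mpr ⟨q, hqmem⟩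
  omega

/-- Updating outside a region `P` does not change the ones count within `P`. -/
lemma card_update_filter_other {y : Fin n → ZMod 2} {q r : Fin n}
    (P : Fin n → Prop) [DecidablePred P] (hPq : ¬ P q) (hPr : ¬ P r) :
    (Finset.univ.filter fun p => P p ∧ (Function.update (Function.update y q 0) r 1) p = 1).card
      = (Finset.univ.filter fun p => P p ∧ y p = 1).card := by
  classical
  congr 1
  apply Finset.filter_congr
  intro p _
  by_cases h2 : p = r
  · subst h2; tauto
  · by_cases h1 : p = q
    · subst h1; tauto
    · rw [Function.update_of_ne h2, Function.update_of_ne h1]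

lemma dist_update {x y : Fin n → ZMod 2} {q r : Fin n} (hqr : q ≠ r)
    (hxq : x q = 1) (hyq : y q = 1) (hxr : ¬ x r = 1) (hyr : ¬ y r = 1) :
    hammingDist x (Function.update (Function.update y q 0) r 1)
      = hammingDist x y + 2 := by
  classical
  set y' := Function.update (Function.update y q 0) r 1 with hy'
  have hy'r : y' r = 1 := by simp [hy']
  have hy'q : y' q = 0 := by
    rw [hy', Function.update_of_ne hqr, Function.update_self]
  have hy'p : ∀ p, p ≠ q → p ≠ r → y' p = y p := by
    intro p h1 h2
    rw [hy', Function.update_of_ne h2, Function.update_of_ne h1]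
  rw [hammingDist_eq_card, hammingDist_eq_card]
  have hset : (Finset.univ.filter fun p => ¬ x p = y' p)
      = insert q (insert r (Finset.univ.filter fun p => ¬ x p = y p)) := by
    ext p
    by_cases h1 : p = q
    · subst h1
      simp only [Finset.mem_insert, Finset.mem_filter, Finset.mem_univ, true_and, hy'q, hxq]
      simp
    · by_cases h2 : p = r
      · subst h2
        have hx0 : x p = 0 := (z2e _).mp hxr
        simp only [Finset.mem_insert, Finset.mem_filter, Finset.mem_univ, true_and, hy'r, hx0]
        simp [h1]
      · simp only [Finset.mem_insert, Finset.mem_filter, Finset.mem_univ, true_and,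
          hy'p p h1 h2]
        tauto
  have hq : q ∉ insert r (Finset.univ.filter fun p => ¬ x p = y p) := by
    simp only [Finset.mem_insert, Finset.mem_filter, Finset.mem_univ, true_and]
    push_neg
    exact ⟨hqr, by rw [hxq, hyq]⟩
  have hr : r ∉ (Finset.univ.filter fun p => ¬ x p = y p) := by
    simp only [Finset.mem_filter, Finset.mem_univ, true_and]
    push_neg
    rw [(z2e _).mp hxr, (z2e _).mp hyr]
  rw [hset, Finset.card_insert_of_notMem hq, Finset.card_insert_of_notMem hr]

/-- Abstract exchange argument: if `x` has `i` ones and `y` has `j` ones in a region of size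
`W`, `y` belongs to a family stable under the exchange operation, and `x, y` achieve the
maximal distance `M` over the family, then the overlap in the region is minimal. -/
lemma exchange_abstract (V2 : Finset (Fin n → ZMod 2)) (b : Fin n → Prop) [DecidablePred b]
    {x y : Fin n → ZMod 2} {i j W M : ℕ}
    (hx : (Finset.univ.filter fun p => b p ∧ x p = 1).card = i)
    (hy : (Finset.univ.filter fun p => b p ∧ y p = 1).card = j)
    (hW : (Finset.univ.filter b).card = W)
    (hupd : ∀ q r : Fin n, q ≠ r → b q → b r → y q = 1 → ¬ y r = 1 →
        Function.update (Function.update y q 0) r 1 ∈ V2)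
    (hmax : ∀ z ∈ V2, hammingDist x z ≤ M)
    (hM : hammingDist x y = M) :
    (Finset.univ.filter fun p => b p ∧ x p = 1 ∧ y p = 1).card = i + j - W := by
  classical
  set X := Finset.univ.filter fun p => b p ∧ x p = 1 with hX
  set Y := Finset.univ.filter fun p => b p ∧ y p = 1 with hY
  have hinter : X ∩ Y = Finset.univ.filter fun p => b p ∧ x p = 1 ∧ y p = 1 := by
    ext p; simp only [hX, hY, Finset.mem_inter, Finset.mem_filter, Finset.mem_univ, true_and]
    tauto
  have hsub : X ∪ Y ⊆ Finset.univ.filter b := by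
    intro p hp
    rcases Finset.mem_union.mp hp with h | h <;>
      simp only [hX, hY, Finset.mem_filter] at h ⊢ <;> exact ⟨h.1, h.2.1⟩
  have hcard : (X ∪ Y).card + (X ∩ Y).card = i + j := by
    rw [Finset.card_union_add_card_inter, hx, hy]
  have hXY : (X ∪ Y).card ≤ W := by
    rw [← hW]; exact Finset.card_le_card hsub
  rw [← hinter]
  by_contra hne
  have hlow : i + j ≤ (X ∩ Y).card + W := by omega
  have hgt : i + j - W < (X ∩ Y).card := by omega
  have hpos : 0 < (X ∩ Y).card := by omega
  have hlt : (X ∪ Y).card < W := by omega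
  obtain ⟨q, hq⟩ := Finset.card_pos.mp hpos
  rw [hinter] at hq
  obtain ⟨-, hbq, hxq, hyq⟩ := Finset.mem_filter.mp hq
  have hrpos : 0 < ((Finset.univ.filter b) \ (X ∪ Y)).card := by
    rw [Finset.card_sdiff_of_subset hsub, hW]; omega
  obtain ⟨r, hr⟩ := Finset.card_pos.mp hrpos
  obtain ⟨hbr', hrXY⟩ := Finset.mem_sdiff.mp hr
  have hbr : b r := (Finset.mem_filter.mp hbr').2
  have hxr : ¬ x r = 1 := fun h => hrXY (Finset.mem_union_left _ (by simp [hX, hbr, h]))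
  have hyr : ¬ y r = 1 := fun h => hrXY (Finset.mem_union_right _ (by simp [hY, hbr, h]))
  have hqr : q ≠ r := fun h => hyr (h ▸ hyq)
  have hmem := hupd q r hqr hbq hbr hyq hyr
  have hd2 := dist_update hqr hxq hyq hxr hyr
  have := hmax _ hmem
  omega

end Exchange

section Perm

variable {n w : ℕ}

lemma card_block1 (h : w ≤ n) :
    (Finset.univ.filter fun p : Fin n => p.val < w).card = w := by
  have key : (Finset.univ.filter fun p : Fin n => p.val < w).card
      = (Finset.univ : Finset (Fin w)).card := by
    refine Finset.card_bij' (fun p hp => (⟨p.val, (Finset.mem_filter.mp hp).2⟩ : Fin w))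
      (fun a _ => (⟨a.val, lt_of_lt_of_le a.isLt h⟩ : Fin n)) ?_ ?_ ?_ ?_
    · intro p hp; exact Finset.mem_univ _
    · intro a _; simp [a.isLt]
    · intro p hp; simp
    · intro a _; simp
  simpa using key

lemma card_block2 (h : w ≤ n) :
    (Finset.univ.filter fun p : Fin n => w ≤ p.val).card = n - w := by
  have h1 := two_filter_card (Finset.univ : Finset (Fin n)) (fun p => p.val < w)
  have h2 : (Finset.univ.filter fun p : Fin n => ¬ p.val < w)
      = (Finset.univ.filter fun p : Fin n => w ≤ p.val) := by
    apply Finset.filter_congr; intro p _; simp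
  rw [h2, card_block1 h, Finset.card_univ, Fintype.card_fin] at h1
  omega

lemma exists_perm (s : Finset (Fin n)) (hcard : s.card = w) (hwn : w ≤ n) :
    ∃ σ : Equiv.Perm (Fin n), ∀ p, p ∈ s ↔ (σ p).val < w := by
  classical
  have h1 : Fintype.card {p // p ∈ s} = Fintype.card {p : Fin n // p.val < w} := by
    rw [Fintype.card_coe, hcard, Fintype.card_subtype, card_block1 hwn]
  have h2 : Fintype.card {p : Fin n // ¬ p ∈ s} = Fintype.card {p : Fin n // ¬ p.val < w} := by
    rw [Fintype.card_subtype_compl, Fintype.card_subtype_compl, h1]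
  let eS := Fintype.equivOfCardEq h1
  let eC := Fintype.equivOfCardEq h2
  refine ⟨(Equiv.sumCompl (· ∈ s)).symm.trans ((Equiv.sumCongr eS eC).trans
    (Equiv.sumCompl (fun p : Fin n => p.val < w))), fun p => ?_⟩
  by_cases hp : p ∈ s
  · simp only [Equiv.trans_apply, Equiv.sumCompl_symm_apply_of_pos hp,
      Equiv.sumCongr_apply, Sum.map_inl, Equiv.sumCompl_apply_inl]
    exact iff_of_true hp (eS ⟨p, hp⟩).2
  · simp only [Equiv.trans_apply, Equiv.sumCompl_symm_apply_of_neg hp,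
      Equiv.sumCongr_apply, Sum.map_inr, Equiv.sumCompl_apply_inr]
    exact iff_of_false hp (eC ⟨p, hp⟩).2

lemma card_filter_perm (σ : Equiv.Perm (Fin n)) (P : Fin n → Prop) [DecidablePred P] :
    (Finset.univ.filter fun p => P (σ.symm p)).card = (Finset.univ.filter P).card := by
  refine Finset.card_bij' (fun p _ => σ.symm p) (fun p _ => σ p) ?_ ?_ ?_ ?_
  · intro p hp
    exact Finset.mem_filter.mpr ⟨Finset.mem_univ _, (Finset.mem_filter.mp hp).2⟩
  · intro p hp
    refine Finset.mem_filter.mpr ⟨Finset.mem_univ _, ?_⟩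
    simpa using (Finset.mem_filter.mp hp).2
  · intro p _; simp
  · intro p _; simp

end Perm

lemma mem_Vset {n w k : ℕ} {z : Fin n → ZMod 2} :
    z ∈ Vset n w k ↔
      (Finset.univ.filter (fun p : Fin n => p.val < w ∧ z p = 1)).card = k ∧
      (Finset.univ.filter (fun p : Fin n => w ≤ p.val ∧ z p = 1)).card = k := by
  simp [Vset]

lemma overlap_of_max {n w i j : ℕ} (hwn : w ≤ n) {x y : Fin n → ZMod 2}
    (hx : x ∈ Vset n w i) (hy : y ∈ Vset n w j)
    (hM : hammingDist x y = mMax n w i j) :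
    (Finset.univ.filter (fun p : Fin n => p.val < w ∧ x p = 1 ∧ y p = 1)).card = i + j - w ∧
    (Finset.univ.filter (fun p : Fin n => w ≤ p.val ∧ x p = 1 ∧ y p = 1)).card
      = i + j - (n - w) := by
  classical
  have hmax : ∀ z ∈ Vset n w j, hammingDist x z ≤ mMax n w i j := by
    intro z hz
    have := Finset.le_sup (b := (x, z)) (f := fun p : (Fin n → ZMod 2) × (Fin n → ZMod 2) =>
      hammingDist p.1 p.2) (Finset.mem_product.mpr ⟨hx, hz⟩)
    exact this
  obtain ⟨hx1, hx2⟩ := mem_Vset.mp hx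
  obtain ⟨hy1, hy2⟩ := mem_Vset.mp hy
  constructor
  · refine exchange_abstract (Vset n w j) (fun p : Fin n => p.val < w) hx1 hy1
      (card_block1 hwn) ?_ hmax hM
    intro q r hqr hbq hbr hyq hyr
    refine mem_Vset.mpr ⟨?_, ?_⟩
    · rw [card_update_filter hqr _ hbq hbr hyq hyr]; exact hy1
    · rw [card_update_filter_other _ (by omega : ¬ w ≤ q.val) (by omega : ¬ w ≤ r.val)]
      exact hy2
  · refine exchange_abstract (Vset n w j) (fun p : Fin n => w ≤ p.val) hx2 hy2
      (card_block2 hwn) ?_ hmax hM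
    intro q r hqr hbq hbr hyq hyr
    refine mem_Vset.mpr ⟨?_, ?_⟩
    · rw [card_update_filter_other _ (by omega : ¬ q.val < w) (by omega : ¬ r.val < w)]
      exact hy1
    · rw [card_update_filter hqr _ hbq hbr hyq hyr]; exact hy2


section PairStructure

variable {n w : ℕ}

lemma card_perm_lt (σ : Equiv.Perm (Fin n)) {s : Finset (Fin n)}
    (hσ : ∀ p, p ∈ s ↔ (σ p).val < w) (R : Fin n → Prop) [DecidablePred R] :
    (Finset.univ.filter fun p => p.val < w ∧ R (σ.symm p)).card
      = (Finset.univ.filter fun t => t ∈ s ∧ R t).card := by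
  refine Finset.card_bij' (fun p _ => σ.symm p) (fun t _ => σ t) ?_ ?_ ?_ ?_
  · intro p hp
    obtain ⟨-, h1, h2⟩ := Finset.mem_filter.mp hp
    refine Finset.mem_filter.mpr ⟨Finset.mem_univ _, ?_, h2⟩
    rw [hσ (σ.symm p)]
    simpa using h1
  · intro t ht
    obtain ⟨-, h1, h2⟩ := Finset.mem_filter.mp ht
    refine Finset.mem_filter.mpr ⟨Finset.mem_univ _, ?_, by simpa using h2⟩
    exact (hσ t).mp h1
  · intro p _; simp
  · intro t _; simp

lemma card_perm_ge (σ : Equiv.Perm (Fin n)) {s : Finset (Fin n)}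
    (hσ : ∀ p, p ∈ s ↔ (σ p).val < w) (R : Fin n → Prop) [DecidablePred R] :
    (Finset.univ.filter fun p => w ≤ p.val ∧ R (σ.symm p)).card
      = (Finset.univ.filter fun t => ¬ t ∈ s ∧ R t).card := by
  refine Finset.card_bij' (fun p _ => σ.symm p) (fun t _ => σ t) ?_ ?_ ?_ ?_
  · intro p hp
    obtain ⟨-, h1, h2⟩ := Finset.mem_filter.mp hp
    refine Finset.mem_filter.mpr ⟨Finset.mem_univ _, ?_, h2⟩
    intro hmem
    have := (hσ (σ.symm p)).mp hmem
    simp only [Equiv.apply_symm_apply] at this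
    omega
  · intro t ht
    obtain ⟨-, h1, h2⟩ := Finset.mem_filter.mp ht
    refine Finset.mem_filter.mpr ⟨Finset.mem_univ _, ?_, by simpa using h2⟩
    have h3 : ¬ ((σ t).val < w) := fun hlt => h1 ((hσ t).mpr hlt)
    exact Nat.le_of_not_lt h3
  · intro p _; simp
  · intro t _; simp

lemma filter_mem_and {α : Type*} [Fintype α] [DecidableEq α] (s : Finset α)
    (R : α → Prop) [DecidablePred R] :
    Finset.univ.filter (fun t => t ∈ s ∧ R t) = s.filter R := by
  ext t; simp only [Finset.mem_filter, Finset.mem_univ, true_and]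

lemma filter_not_mem_and {α : Type*} [Fintype α] [DecidableEq α]
    (P : α → Prop) [DecidablePred P] (R : α → Prop) [DecidablePred R] :
    Finset.univ.filter (fun t => ¬ t ∈ Finset.univ.filter P ∧ R t)
      = (Finset.univ.filter (fun t => ¬ P t)).filter R := by
  ext t; simp only [Finset.mem_filter, Finset.mem_univ, true_and]

lemma pair_structure {n d w i j : ℕ} {C : Finset (Fin n → ZMod 2)}
    (hcode : IsCWCode n d w C) (hwn : w ≤ n)
    {c u v : Fin n → ZMod 2} (hc : c ∈ C)
    (hu : u ∈ Sdist C c (2 * i)) (hv : v ∈ Sdist C c (2 * j))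
    (hij : i ≠ j) (hm : mMax n w i j = d) :
    ((Finset.univ.filter fun p : Fin n => c p = 1).filter
        (fun p => u p + c p = 1 ∧ v p + c p = 1)).card = i + j - w ∧
    ((Finset.univ.filter fun p : Fin n => ¬ c p = 1).filter
        (fun p => u p + c p = 1 ∧ v p + c p = 1)).card = i + j - (n - w) := by
  classical
  have hscard : (Finset.univ.filter fun p : Fin n => c p = 1).card = w := hcode.1 c hc
  obtain ⟨huC, hud⟩ := mem_Sdist.mp hu
  obtain ⟨hvC, hvd⟩ := mem_Sdist.mp hv
  obtain ⟨σ, hσ⟩ := exists_perm _ hscard hwn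
  have hsplitu := ones_split hscard (hcode.1 u huC) hud
  have hsplitv := ones_split hscard (hcode.1 v hvC) hvd
  have hmemx' : (fun p => u (σ.symm p) + c (σ.symm p)) ∈ Vset n w i := by
    refine mem_Vset.mpr ⟨?_, ?_⟩
    · exact (card_perm_lt σ hσ (fun t => u t + c t = 1)).trans
        (by rw [filter_mem_and]; exact hsplitu.1)
    · exact (card_perm_ge σ hσ (fun t => u t + c t = 1)).trans
        (by rw [filter_not_mem_and]; exact hsplitu.2)
  have hmemy' : (fun p => v (σ.symm p) + c (σ.symm p)) ∈ Vset n w j := by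
    refine mem_Vset.mpr ⟨?_, ?_⟩
    · exact (card_perm_lt σ hσ (fun t => v t + c t = 1)).trans
        (by rw [filter_mem_and]; exact hsplitv.1)
    · exact (card_perm_ge σ hσ (fun t => v t + c t = 1)).trans
        (by rw [filter_not_mem_and]; exact hsplitv.2)
  have hd1 : hammingDist (fun p => u (σ.symm p) + c (σ.symm p))
      (fun p => v (σ.symm p) + c (σ.symm p)) = hammingDist u v := by
    rw [hammingDist_eq_card, hammingDist_eq_card]
    have e1 : (Finset.univ.filter fun p : Fin n =>
        ¬ (u (σ.symm p) + c (σ.symm p) = v (σ.symm p) + c (σ.symm p))).card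
        = (Finset.univ.filter fun t : Fin n => ¬ (u t + c t = v t + c t)).card :=
      card_filter_perm σ (fun t => ¬ (u t + c t = v t + c t))
    have e2 : (Finset.univ.filter fun t : Fin n => ¬ (u t + c t = v t + c t))
        = (Finset.univ.filter fun t : Fin n => ¬ u t = v t) := by
      apply Finset.filter_congr
      intro t _
      constructor
      · intro h h'; exact h (by rw [h'])
      · intro h h'; exact h (add_right_cancel h')
    exact e1.trans (by rw [e2])
  have huv : u ≠ v := by
    intro h
    rw [h, hvd] at hud
    omega
  have hge : d ≤ hammingDist u v := hcode.2 u huC v hvC huv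
  have hle : hammingDist (fun p => u (σ.symm p) + c (σ.symm p))
      (fun p => v (σ.symm p) + c (σ.symm p)) ≤ mMax n w i j := by
    have := Finset.le_sup
      (b := ((fun p => u (σ.symm p) + c (σ.symm p)), (fun p => v (σ.symm p) + c (σ.symm p))))
      (f := fun p : (Fin n → ZMod 2) × (Fin n → ZMod 2) =>
        hammingDist p.1 p.2) (Finset.mem_product.mpr ⟨hmemx', hmemy'⟩)
    exact this
  have hM : hammingDist (fun p => u (σ.symm p) + c (σ.symm p))
      (fun p => v (σ.symm p) + c (σ.symm p)) = mMax n w i j := by omega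
  obtain ⟨o1, o2⟩ := overlap_of_max hwn hmemx' hmemy' hM
  constructor
  · rw [← filter_mem_and]
    exact (card_perm_lt σ hσ (fun t => u t + c t = 1 ∧ v t + c t = 1)).symm.trans o1
  · rw [← filter_not_mem_and]
    exact (card_perm_ge σ hσ (fun t => u t + c t = 1 ∧ v t + c t = 1)).symm.trans o2

end PairStructure

section Block

variable {n : ℕ}

lemma block_count (K : Finset (Fin n)) {W i j : ℕ} (hK : K.card = W)
    (px py : Fin n → Prop) [DecidablePred px] [DecidablePred py]
    (hx : (K.filter px).card = i) (hy : (K.filter py).card = j)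
    (hxy : (K.filter (fun p => px p ∧ py p)).card = i + j - W)
    (hlow : i + j ≤ (K.filter (fun p => px p ∧ py p)).card + W) :
    (((if W < j + i then K.filter py else K \ K.filter py).filter
        (fun p => if W < j + i then px p else ¬ px p)).card = ((j : ℤ) + i - (W : ℤ)).natAbs)
    ∧ ∀ p ∈ K, p ∉ (if W < j + i then K.filter py else K \ K.filter py) →
        (px p ↔ W < j + i) := by
  classical
  have hjW : j ≤ W := by rw [← hy, ← hK]; exact Finset.card_le_card (Finset.filter_subset _ _)
  have hiW : i ≤ W := by rw [← hx, ← hK]; exact Finset.card_le_card (Finset.filter_subset _ _)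
  -- split of the x-ones by py
  have hxsplit : (K.filter px).card = (K.filter (fun p => px p ∧ py p)).card
      + (K.filter (fun p => px p ∧ ¬ py p)).card := by
    rw [two_filter_card (K.filter px) py]
    congr 1 <;> · rw [Finset.filter_filter]
  -- split of K by py
  have hKsplit : K.card = (K.filter py).card + (K.filter (fun p => ¬ py p)).card :=
    two_filter_card K py
  by_cases h : W < j + i
  · simp only [if_pos h]
    constructor
    · have e : (K.filter py).filter px = K.filter (fun p => px p ∧ py p) := by
        rw [Finset.filter_filter]
        apply Finset.filter_congr
        intro p _
        tauto
      rw [e, hxy]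
      omega
    · intro p hpK hpB
      have hnpy : ¬ py p := fun hpy => hpB (Finset.mem_filter.mpr ⟨hpK, hpy⟩)
      -- the set of x-ones outside py fills all of K \ (py-part)
      have hcard1 : (K.filter (fun p => px p ∧ ¬ py p)).card = W - j := by omega
      have hcard2 : (K.filter (fun p => ¬ py p)).card = W - j := by omega
      have hsub : K.filter (fun p => px p ∧ ¬ py p) ⊆ K.filter (fun p => ¬ py p) := by
        intro q hq
        obtain ⟨h1, h2, h3⟩ := Finset.mem_filter.mp hq
        exact Finset.mem_filter.mpr ⟨h1, h3⟩
      have heq : K.filter (fun p => px p ∧ ¬ py p) = K.filter (fun p => ¬ py p) :=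
        Finset.eq_of_subset_of_card_le hsub (by omega)
      have hp : p ∈ K.filter (fun p => ¬ py p) := Finset.mem_filter.mpr ⟨hpK, hnpy⟩
      rw [← heq] at hp
      exact iff_of_true (Finset.mem_filter.mp hp).2.1 h
  · simp only [if_neg h]
    have hxy0 : (K.filter (fun p => px p ∧ py p)).card = 0 := by omega
    have hempty : K.filter (fun p => px p ∧ py p) = ∅ := Finset.card_eq_zero.mp hxy0
    constructor
    · have hBcard : (K \ K.filter py).card = W - j := by
        rw [Finset.card_sdiff_of_subset (Finset.filter_subset _ _), hK, hy]
      have e : (K \ K.filter py).filter px = K.filter (fun p => px p ∧ ¬ py p) := by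
        ext q
        simp only [Finset.mem_filter, Finset.mem_sdiff]
        tauto
      have hsplitB : (K \ K.filter py).card = ((K \ K.filter py).filter px).card
          + ((K \ K.filter py).filter (fun p => ¬ px p)).card := two_filter_card _ px
      rw [e] at hsplitB
      have : (K.filter (fun p => px p ∧ ¬ py p)).card = i := by omega
      omega
    · intro p hpK hpB
      have hpy : py p := by
        by_contra hnpy
        exact hpB (Finset.mem_sdiff.mpr ⟨hpK, fun hmem => hnpy (Finset.mem_filter.mp hmem).2⟩)
      refine iff_of_false (fun hpx => ?_) h
      have : p ∈ K.filter (fun p => px p ∧ py p) := Finset.mem_filter.mpr ⟨hpK, hpx, hpy⟩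
      rw [hempty] at this
      exact absurd this (Finset.notMem_empty p)

lemma overlap_lower (K : Finset (Fin n)) {W i j : ℕ} (hK : K.card = W)
    (px py : Fin n → Prop) [DecidablePred px] [DecidablePred py]
    (hx : (K.filter px).card = i) (hy : (K.filter py).card = j) :
    i + j ≤ (K.filter (fun p => px p ∧ py p)).card + W := by
  classical
  have h1 : (K.filter px) ∪ (K.filter py) ⊆ K :=
    Finset.union_subset (Finset.filter_subset _ _) (Finset.filter_subset _ _)
  have h2 : (K.filter px) ∩ (K.filter py) = K.filter (fun p => px p ∧ py p) := by
    ext q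
    simp only [Finset.mem_inter, Finset.mem_filter]
    tauto
  have h3 := Finset.card_union_add_card_inter (K.filter px) (K.filter py)
  have h4 : ((K.filter px) ∪ (K.filter py)).card ≤ W := hK ▸ Finset.card_le_card h1
  rw [h2, hx, hy] at h3
  omega

end Block

lemma z2h0 : ∀ a b : ZMod 2, a + (b + 0) = 1 ↔ a + b = 1 := by decide
lemma z2h1 : ∀ a b : ZMod 2, a + (b + 1) = 1 ↔ ¬ (a + b = 1) := by decide

lemma cross_le_T {n d w i j : ℕ} {C : Finset (Fin n → ZMod 2)}
    (hcode : IsCWCode n d w C) (hwn : w ≤ n)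
    {c v : Fin n → ZMod 2} (hc : c ∈ C) (hv : v ∈ Sdist C c (2 * j))
    (hij : i ≠ j) (hm : mMax n w i j = d) :
    (Sdist C c (2 * i)).card ≤
      T (((j : ℤ) + i - (w : ℤ)).natAbs) (if w < j + i then j else w - j)
        (((j : ℤ) + i - ((n - w : ℕ) : ℤ)).natAbs)
        (if n - w < j + i then j else (n - w) - j) d := by
  classical
  set s := Finset.univ.filter (fun p : Fin n => c p = 1) with hs
  set sc := Finset.univ.filter (fun p : Fin n => ¬ c p = 1) with hsc
  have hscard : s.card = w := hcode.1 c hc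
  have hsccard : sc.card = n - w := by
    have := two_filter_card (Finset.univ : Finset (Fin n)) (fun p => c p = 1)
    simp only [Finset.card_univ, Fintype.card_fin] at this
    rw [← hs, ← hsc] at this
    omega
  obtain ⟨hvC, hvd⟩ := mem_Sdist.mp hv
  have hsplitv := ones_split hscard (hcode.1 v hvC) hvd
  set B1 := if w < j + i then s.filter (fun p => v p + c p = 1)
      else s \ s.filter (fun p => v p + c p = 1) with hB1
  set B2 := if n - w < j + i then sc.filter (fun p => v p + c p = 1)
      else sc \ sc.filter (fun p => v p + c p = 1) with hB2
  have hB1s : B1 ⊆ s := by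
    rw [hB1]; split
    · exact Finset.filter_subset _ _
    · exact Finset.sdiff_subset
  have hB2sc : B2 ⊆ sc := by
    rw [hB2]; split
    · exact Finset.filter_subset _ _
    · exact Finset.sdiff_subset
  have hB1card : B1.card = (if w < j + i then j else w - j) := by
    rw [hB1]; split
    · exact hsplitv.1
    · rw [Finset.card_sdiff_of_subset (Finset.filter_subset _ _), hscard, hsplitv.1]
  have hB2card : B2.card = (if n - w < j + i then j else (n - w) - j) := by
    rw [hB2]; split
    · exact hsplitv.2
    · rw [Finset.card_sdiff_of_subset (Finset.filter_subset _ _), hsccard, hsplitv.2]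
  set g : Fin n → ZMod 2 := fun p => c p + (if c p = 1 then (if w < j + i then 0 else 1)
      else (if n - w < j + i then 0 else 1)) with hg
  -- the block-count facts for each codeword at distance 2i
  have key1 : ∀ u ∈ Sdist C c (2 * i),
      ((B1.filter (fun p => if w < j + i then u p + c p = 1 else ¬ (u p + c p = 1))).card
        = ((j : ℤ) + i - (w : ℤ)).natAbs)
      ∧ ∀ p ∈ s, p ∉ B1 → ((u p + c p = 1) ↔ w < j + i) := by
    intro u hu
    obtain ⟨huC, hud⟩ := mem_Sdist.mp hu
    have hsplitu := ones_split hscard (hcode.1 u huC) hud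
    have hpair := pair_structure hcode hwn hc hu hv hij hm
    have hbc := block_count s hscard (fun p => u p + c p = 1) (fun p => v p + c p = 1)
      hsplitu.1 hsplitv.1 hpair.1
      (overlap_lower s hscard _ _ hsplitu.1 hsplitv.1)
    rw [← hB1] at hbc
    exact hbc
  have key2 : ∀ u ∈ Sdist C c (2 * i),
      ((B2.filter (fun p => if n - w < j + i then u p + c p = 1 else ¬ (u p + c p = 1))).card
        = ((j : ℤ) + i - ((n - w : ℕ) : ℤ)).natAbs)
      ∧ ∀ p ∈ sc, p ∉ B2 → ((u p + c p = 1) ↔ n - w < j + i) := by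
    intro u hu
    obtain ⟨huC, hud⟩ := mem_Sdist.mp hu
    have hsplitu := ones_split hscard (hcode.1 u huC) hud
    have hpair := pair_structure hcode hwn hc hu hv hij hm
    have hbc := block_count sc hsccard (fun p => u p + c p = 1) (fun p => v p + c p = 1)
      hsplitu.2 hsplitv.2 hpair.2
      (overlap_lower sc hsccard _ _ hsplitu.2 hsplitv.2)
    rw [← hB2] at hbc
    exact hbc
  refine restrict_le_T _ B1 B2 ?_ g hB1card hB2card ?_ ?_ ?_ ?_
  · intro p hp1 hp2
    exact (Finset.mem_filter.mp (hB2sc hp2)).2 (Finset.mem_filter.mp (hB1s hp1)).2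
  · intro u hu
    have e : B1.filter (fun p => u p + g p = 1)
        = B1.filter (fun p => if w < j + i then u p + c p = 1 else ¬ (u p + c p = 1)) := by
      apply Finset.filter_congr
      intro p hp
      have hcp : c p = 1 := (Finset.mem_filter.mp (hB1s hp)).2
      rw [hg]
      simp only [hcp, if_pos, eq_self_iff_true, if_true]
      split
      · exact z2h0 (u p) 1
      · exact z2h1 (u p) 1
    rw [e]
    exact (key1 u hu).1
  · intro u hu
    have e : B2.filter (fun p => u p + g p = 1)
        = B2.filter (fun p => if n - w < j + i then u p + c p = 1 else ¬ (u p + c p = 1)) := by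
      apply Finset.filter_congr
      intro p hp
      have hcp : ¬ c p = 1 := (Finset.mem_filter.mp (hB2sc hp)).2
      rw [hg]
      simp only [hcp, if_neg, if_false]
      split
      · exact z2h0 (u p) (c p)
      · exact z2h1 (u p) (c p)
    rw [e]
    exact (key2 u hu).1
  · intro u hu u' hu' p hp1 hp2
    by_cases hcp : c p = 1
    · have hps : p ∈ s := Finset.mem_filter.mpr ⟨Finset.mem_univ _, hcp⟩
      have h1 := (key1 u hu).2 p hps hp1
      have h2 := (key1 u' hu').2 p hps hp1
      by_cases hcase : w < j + i
      · have e1 : u p + c p = 1 := h1.mpr hcase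
        have e2 : u' p + c p = 1 := h2.mpr hcase
        exact add_right_cancel (e1.trans e2.symm)
      · have e1 : u p + c p = 0 := (z2e _).mp (fun hh => hcase (h1.mp hh))
        have e2 : u' p + c p = 0 := (z2e _).mp (fun hh => hcase (h2.mp hh))
        exact add_right_cancel (e1.trans e2.symm)
    · have hps : p ∈ sc := Finset.mem_filter.mpr ⟨Finset.mem_univ _, hcp⟩
      have h1 := (key2 u hu).2 p hps hp2
      have h2 := (key2 u' hu').2 p hps hp2
      by_cases hcase : n - w < j + i
      · have e1 : u p + c p = 1 := h1.mpr hcase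
        have e2 : u' p + c p = 1 := h2.mpr hcase
        exact add_right_cancel (e1.trans e2.symm)
      · have e1 : u p + c p = 0 := (z2e _).mp (fun hh => hcase (h1.mp hh))
        have e2 : u' p + c p = 0 := (z2e _).mp (fun hh => hcase (h2.mp hh))
        exact add_right_cancel (e1.trans e2.symm)
  · intro u hu u' hu' hne
    exact hcode.2 u (mem_Sdist.mp hu).1 u' (mem_Sdist.mp hu').1 hne

lemma mMax_comm (n w i j : ℕ) : mMax n w i j = mMax n w j i := by
  unfold mMax
  apply le_antisymm <;>
  · apply Finset.sup_le
    intro p hp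
    obtain ⟨h1, h2⟩ := Finset.mem_product.mp hp
    have := Finset.le_sup (b := (p.2, p.1))
      (f := fun q : (Fin _ → ZMod 2) × (Fin _ → ZMod 2) => hammingDist q.1 q.2)
      (Finset.mem_product.mpr ⟨h2, h1⟩)
    simpa [hammingDist_comm] using this


set_option maxHeartbeats 2000000 in
/-- For a nonempty `(n,d,w)` constant-weight code `C` (`d` even,
`d < 2w ≤ n`), `i ≠ j` in `H` with `m_{i,j} = d`, and positive integers
`P_i, P_j, P_{ij}, P_{ji}` as described, every `c ∈ C` satisfies the three
conditional inequalities. -/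
theorem Sdist_equality_case (n d w i j : ℕ) (C : Finset (Fin n → ZMod 2)) (hC : C.Nonempty)
    (hcode : IsCWCode n d w C) (hd : Even d) (hdw : d < 2 * w) (hwn : 2 * w ≤ n)
    (hi : i ∈ Finset.Icc (d / 2) w) (hj : j ∈ Finset.Icc (d / 2) w) (hij : i ≠ j)
    (hm : mMax n w i j = d)
    (Pi Pj Pij Pji : ℤ) (hPi0 : 0 < Pi) (hPj0 : 0 < Pj) (hPij0 : 0 < Pij) (hPji0 : 0 < Pji)
    (hPi : (T i w i (n - w) d : ℤ) ≤ Pi) (hPj : (T j w j (n - w) d : ℤ) ≤ Pj)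
    (hPji : (T (((i : ℤ) + j - (w : ℤ)).natAbs)
        (if w < i + j then i else w - i)
        (((i : ℤ) + j - ((n - w : ℕ) : ℤ)).natAbs)
        (if n - w < i + j then i else (n - w) - i) d : ℤ) ≤ Pji)
    (hPij : (T (((j : ℤ) + i - (w : ℤ)).natAbs)
        (if w < j + i then j else w - j)
        (((j : ℤ) + i - ((n - w : ℕ) : ℤ)).natAbs)
        (if n - w < j + i then j else (n - w) - j) d : ℤ) ≤ Pij)
    (c : Fin n → ZMod 2) (hc : c ∈ C) :
    ((1 : ℚ) ≤ (Pij : ℚ) / (Pi : ℚ) + (Pji : ℚ) / (Pj : ℚ) →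
      (((Pj : ℚ) - (Pji : ℚ)) / ((Pj : ℚ) * (Pij : ℚ))) * ((Sdist C c (2 * i)).card : ℚ) +
        (1 / (Pj : ℚ)) * ((Sdist C c (2 * j)).card : ℚ) ≤ 1) ∧
    ((1 : ℚ) ≤ (Pij : ℚ) / (Pi : ℚ) + (Pji : ℚ) / (Pj : ℚ) →
      (1 / (Pi : ℚ)) * ((Sdist C c (2 * i)).card : ℚ) +
        (((Pi : ℚ) - (Pij : ℚ)) / ((Pi : ℚ) * (Pji : ℚ))) * ((Sdist C c (2 * j)).card : ℚ) ≤ 1) ∧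
    ((Pij : ℚ) / (Pi : ℚ) + (Pji : ℚ) / (Pj : ℚ) ≤ 1 →
      (1 / (Pi : ℚ)) * ((Sdist C c (2 * i)).card : ℚ) +
        (1 / (Pj : ℚ)) * ((Sdist C c (2 * j)).card : ℚ) ≤ 1) := by
  classical
  have hw_le_n : w ≤ n := by omega
  have hmji : mMax n w j i = d := by rw [← hm]; exact mMax_comm n w j i
  set a : ℕ := (Sdist C c (2 * i)).card with haa
  set b : ℕ := (Sdist C c (2 * j)).card with hbb
  have fA : (a : ℤ) ≤ Pi :=
    le_trans (by exact_mod_cast Sdist_le_T_single hcode hc (k := i)) hPi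
  have fB : (b : ℤ) ≤ Pj :=
    le_trans (by exact_mod_cast Sdist_le_T_single hcode hc (k := j)) hPj
  have fab : (Sdist C c (2 * j)).Nonempty → (a : ℤ) ≤ Pij := by
    rintro ⟨v, hv⟩
    exact le_trans (by exact_mod_cast cross_le_T hcode hw_le_n hc hv hij hm) hPij
  have fba : (Sdist C c (2 * i)).Nonempty → (b : ℤ) ≤ Pji := by
    rintro ⟨u, hu⟩
    exact le_trans (by exact_mod_cast cross_le_T hcode hw_le_n hc hu hij.symm hmji) hPji
  have hPi' : (0:ℚ) < Pi := by exact_mod_cast hPi0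
  have hPj' : (0:ℚ) < Pj := by exact_mod_cast hPj0
  have hPij' : (0:ℚ) < Pij := by exact_mod_cast hPij0
  have hPji' : (0:ℚ) < Pji := by exact_mod_cast hPji0
  have haPi : (a:ℚ) ≤ Pi := by exact_mod_cast fA
  have hbPj : (b:ℚ) ≤ Pj := by exact_mod_cast fB
  have ha0 : (0:ℚ) ≤ a := Nat.cast_nonneg a
  have hb0 : (0:ℚ) ≤ b := Nat.cast_nonneg b
  refine ⟨?_, ?_, ?_⟩
  · intro hyp
    rw [div_add_div _ _ (ne_of_gt hPi') (ne_of_gt hPj'), le_div_iff₀ (by positivity)] at hyp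
    have hform : ((Pj:ℚ) - Pji) / (Pj * Pij) * a + 1 / Pj * b
        = (((Pj:ℚ) - Pji) * a + Pij * b) / (Pj * Pij) := by
      field_simp
    rw [hform, div_le_one (by positivity)]
    rcases Finset.eq_empty_or_nonempty (Sdist C c (2 * j)) with hS | hS
    · have hbz : (b:ℚ) = 0 := by
        have : b = 0 := by rw [hbb, hS, Finset.card_empty]
        exact_mod_cast this
      rcases Finset.eq_empty_or_nonempty (Sdist C c (2 * i)) with hS' | hS'
      · have haz : (a:ℚ) = 0 := by
          have : a = 0 := by rw [haa, hS', Finset.card_empty]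
          exact_mod_cast this
        rw [haz, hbz]
        nlinarith [mul_pos hPj' hPij']
      · by_cases hsign : (Pji:ℚ) ≤ Pj
        · nlinarith [mul_le_mul_of_nonneg_left haPi (sub_nonneg.mpr hsign)]
        · nlinarith [mul_nonneg ha0 (sub_nonneg.mpr (le_of_lt (not_le.mp hsign))),
            mul_pos hPj' hPij']
    · have haPij : (a:ℚ) ≤ Pij := by exact_mod_cast fab hS
      rcases Finset.eq_empty_or_nonempty (Sdist C c (2 * i)) with hS' | hS'
      · have haz : (a:ℚ) = 0 := by
          have : a = 0 := by rw [haa, hS', Finset.card_empty]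
          exact_mod_cast this
        rw [haz]
        nlinarith [mul_le_mul_of_nonneg_left hbPj (le_of_lt hPij')]
      · have hbPji : (b:ℚ) ≤ Pji := by exact_mod_cast fba hS'
        by_cases hsign : (Pji:ℚ) ≤ Pj
        · nlinarith [mul_le_mul_of_nonneg_left haPij (sub_nonneg.mpr hsign),
            mul_le_mul_of_nonneg_left hbPji (le_of_lt hPij')]
        · nlinarith [mul_nonneg ha0 (sub_nonneg.mpr (le_of_lt (not_le.mp hsign))),
            mul_le_mul_of_nonneg_left hbPj (le_of_lt hPij')]
  · intro hyp
    rw [div_add_div _ _ (ne_of_gt hPi') (ne_of_gt hPj'), le_div_iff₀ (by positivity)] at hyp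
    have hform : 1 / (Pi:ℚ) * a + ((Pi:ℚ) - Pij) / (Pi * Pji) * b
        = ((Pji:ℚ) * a + ((Pi:ℚ) - Pij) * b) / (Pi * Pji) := by
      field_simp
    rw [hform, div_le_one (by positivity)]
    rcases Finset.eq_empty_or_nonempty (Sdist C c (2 * i)) with hS | hS
    · have haz : (a:ℚ) = 0 := by
        have : a = 0 := by rw [haa, hS, Finset.card_empty]
        exact_mod_cast this
      rcases Finset.eq_empty_or_nonempty (Sdist C c (2 * j)) with hS' | hS'
      · have hbz : (b:ℚ) = 0 := by
          have : b = 0 := by rw [hbb, hS', Finset.card_empty]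
          exact_mod_cast this
        rw [haz, hbz]
        nlinarith [mul_pos hPi' hPji']
      · by_cases hsign : (Pij:ℚ) ≤ Pi
        · nlinarith [mul_le_mul_of_nonneg_left hbPj (sub_nonneg.mpr hsign)]
        · nlinarith [mul_nonneg hb0 (sub_nonneg.mpr (le_of_lt (not_le.mp hsign))),
            mul_pos hPi' hPji']
    · have hbPji : (b:ℚ) ≤ Pji := by exact_mod_cast fba hS
      rcases Finset.eq_empty_or_nonempty (Sdist C c (2 * j)) with hS' | hS'
      · have hbz : (b:ℚ) = 0 := by
          have : b = 0 := by rw [hbb, hS', Finset.card_empty]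
          exact_mod_cast this
        rw [hbz]
        nlinarith [mul_le_mul_of_nonneg_left haPi (le_of_lt hPji')]
      · have haPij : (a:ℚ) ≤ Pij := by exact_mod_cast fab hS'
        by_cases hsign : (Pij:ℚ) ≤ Pi
        · nlinarith [mul_le_mul_of_nonneg_left hbPji (sub_nonneg.mpr hsign),
            mul_le_mul_of_nonneg_left haPij (le_of_lt hPji')]
        · nlinarith [mul_nonneg hb0 (sub_nonneg.mpr (le_of_lt (not_le.mp hsign))),
            mul_le_mul_of_nonneg_left haPi (le_of_lt hPji')]
  · intro hyp
    rw [div_add_div _ _ (ne_of_gt hPi') (ne_of_gt hPj'), div_le_one (by positivity)] at hyp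
    have hform : 1 / (Pi:ℚ) * a + 1 / (Pj:ℚ) * b
        = ((Pj:ℚ) * a + (Pi:ℚ) * b) / (Pi * Pj) := by
      field_simp
    rw [hform, div_le_one (by positivity)]
    rcases Finset.eq_empty_or_nonempty (Sdist C c (2 * i)) with hS | hS
    · have haz : (a:ℚ) = 0 := by
        have : a = 0 := by rw [haa, hS, Finset.card_empty]
        exact_mod_cast this
      rw [haz]
      nlinarith [mul_le_mul_of_nonneg_left hbPj (le_of_lt hPi')]
    · rcases Finset.eq_empty_or_nonempty (Sdist C c (2 * j)) with hS' | hS'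
      · have hbz : (b:ℚ) = 0 := by
          have : b = 0 := by rw [hbb, hS', Finset.card_empty]
          exact_mod_cast this
        rw [hbz]
        nlinarith [mul_le_mul_of_nonneg_left haPi (le_of_lt hPj')]
      · have haPij : (a:ℚ) ≤ Pij := by exact_mod_cast fab hS'
        have hbPji : (b:ℚ) ≤ Pji := by exact_mod_cast fba hS
        nlinarith [mul_le_mul_of_nonneg_left haPij (le_of_lt hPj'),
          mul_le_mul_of_nonneg_left hbPji (le_of_lt hPi')]
end

section
/- Let C be a nonempty (n,d,w) constant-weight code with d even and d < 2w ≤ n, with distance distribution {A_{2i}}, and let H = {d/2, …, w}. Suppose i ≠ j are in H with m_{i,j} = d. Let P_i, P_j, P_{ij}, P_{ji} be positive integers with P_i ≥ T(i,w,i,n−w,d), P_j ≥ T(j,w,j,n−w,d), P_{ji} ≥ T(w1,n1,w2,n2,d) and P_{ij} ≥ T(w1',n1',w2',n2',d), where w1 = |i+j−w|, n1 = i if w < i+j and n1 = w−i otherwise, w2 = |i+j−(n−w)|, n2 = i if n−w < i+j and n2 = (n−w)−i otherwise, and w1', n1', w2', n2' are defined the same way with the roles of i and j interchanged. Then: (1)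 if P_{ij}/P_i + P_{ji}/P_j ≥ 1, then ((P_j − P_{ji})/(P_j·P_{ij}))·A_{2i} + (1/P_j)·A_{2j} ≤ 1; (2) if P_{ij}/P_i + P_{ji}/P_j ≥ 1, then (1/P_i)·A_{2i} + ((P_i − P_{ij})/(P_i·P_{ji}))·A_{2j} ≤ 1; (3) if P_{ij}/P_i + P_{ji}/P_j ≤ 1, then (1/P_i)·A_{2i} + (1/P_j)·A_{2j} ≤ 1. -/
open Finset

lemma zmod2_cases (z : ZMod 2) : z = 0 ∨ z = 1 := by revert z; decide

lemma zmod2_ne_iff (a b : ZMod 2) : a ≠ b ↔ ((a = 1 ∧ ¬ b = 1) ∨ (¬ a = 1 ∧ b = 1)) := by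
  revert a b; decide

lemma hamming_eq_card {ι : Type*} [Fintype ι] [DecidableEq ι] (u v : ι → ZMod 2) :
    hammingDist u v = (Finset.univ.filter fun x => u x ≠ v x).card := by
  rw [hammingDist]

lemma card_filter_and_add {α : Type*} [Fintype α] [DecidableEq α] (p q : α → Prop)
    [DecidablePred p] [DecidablePred q] :
    (univ.filter fun x => p x ∧ q x).card + (univ.filter fun x => p x ∧ ¬ q x).card
      = (univ.filter p).card := by
  rw [← Finset.filter_filter, ← Finset.filter_filter,
    Finset.card_filter_add_card_filter_not]

lemma card_symmDiff' {α : Type*} [DecidableEq α] (s t : Finset α) :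
    (symmDiff s t).card + 2 * (s ∩ t).card = s.card + t.card := by
  have h1 := Finset.card_inter_add_card_union s t
  have h2 : symmDiff s t = (s ∪ t) \ (s ∩ t) := symmDiff_eq_sup_sdiff_inf s t
  have h3 : (s ∩ t) ⊆ (s ∪ t) := (Finset.inter_subset_left).trans Finset.subset_union_left
  rw [h2]
  have h4 := Finset.card_sdiff_of_subset h3
  have h5 := Finset.card_le_card h3
  omega

/-- inner flip set: positions where `c = 1` and `u ≠ 1`. -/
def AsetI {n : ℕ} (c u : Fin n → ZMod 2) : Finset (Fin n) :=
  univ.filter fun x => c x = 1 ∧ ¬ u x = 1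

/-- outer flip set: positions where `c ≠ 1` and `u = 1`. -/
def AsetO {n : ℕ} (c u : Fin n → ZMod 2) : Finset (Fin n) :=
  univ.filter fun x => ¬ c x = 1 ∧ u x = 1

lemma countA {n w i : ℕ} (c u : Fin n → ZMod 2) (hu : wtOnes u = w) (hc : wtOnes c = w)
    (hd : hammingDist u c = 2 * i) : (AsetI c u).card = i ∧ (AsetO c u).card = i := by
  have e1 := card_filter_and_add (fun x : Fin n => c x = 1) (fun x => u x = 1)
  have e2 := card_filter_and_add (fun x : Fin n => u x = 1) (fun x => c x = 1)
  have e3 : hammingDist u c = (AsetO c u).card + (AsetI c u).card := by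
    rw [hamming_eq_card, AsetO, AsetI]
    rw [← Finset.card_union_of_disjoint (by
      rw [Finset.disjoint_left]; intro a ha hb
      simp only [mem_filter] at ha hb; tauto)]
    rw [← Finset.filter_or]
    refine congrArg Finset.card (Finset.filter_congr fun x _ => ?_)
    rw [zmod2_ne_iff (u x) (c x)]; tauto
  have e4 : (univ.filter fun x : Fin n => c x = 1 ∧ u x = 1).card
      = (univ.filter fun x : Fin n => u x = 1 ∧ c x = 1).card :=
    congrArg Finset.card (Finset.filter_congr fun x _ => by tauto)
  have e5 : (univ.filter fun x : Fin n => u x = 1 ∧ ¬ c x = 1).card = (AsetO c u).card :=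
    congrArg Finset.card (Finset.filter_congr fun x _ => by tauto)
  rw [wtOnes] at hu hc
  have : (AsetI c u).card = (univ.filter fun x : Fin n => c x = 1 ∧ ¬ u x = 1).card := rfl
  omega

lemma hamming_split {n : ℕ} (c u v : Fin n → ZMod 2) :
    hammingDist u v =
      (univ.filter fun x => c x = 1 ∧ u x ≠ v x).card
      + (univ.filter fun x => ¬ c x = 1 ∧ u x ≠ v x).card := by
  rw [hamming_eq_card]
  rw [← card_filter_and_add (fun x => u x ≠ v x) (fun x => c x = 1)]
  congr 1 <;>
    exact congrArg Finset.card (Finset.filter_congr fun x _ => by tauto)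

lemma le_T_of_code {w1 n1 w2 n2 d : ℕ} (D : Finset (Fin n1 ⊕ Fin n2 → ZMod 2))
    (h : IsDCWCode w1 n1 w2 n2 d D) : D.card ≤ T w1 n1 w2 n2 d := by
  apply le_csSup
  · exact ⟨Fintype.card (Fin n1 ⊕ Fin n2 → ZMod 2),
      fun M ⟨E, _, hE⟩ => hE ▸ Finset.card_le_univ E⟩
  · exact ⟨D, h, rfl⟩

lemma card_le_T_of {n n1 n2 w1 w2 d : ℕ} (S : Finset (Fin n → ZMod 2))
    (g : Fin n → ZMod 2) (P Q : Finset (Fin n)) (hPQ : Disjoint P Q)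
    (hP : P.card = n1) (hQ : Q.card = n2)
    (hdiff : ∀ u ∈ S, ∀ u' ∈ S, ∀ x, u x ≠ u' x → x ∈ P ∨ x ∈ Q)
    (hw1 : ∀ u ∈ S, (P.filter fun x => u x + g x = 1).card = w1)
    (hw2 : ∀ u ∈ S, (Q.filter fun x => u x + g x = 1).card = w2)
    (hdist : ∀ u ∈ S, ∀ u' ∈ S, u ≠ u' → d ≤ hammingDist u u') :
    S.card ≤ T w1 n1 w2 n2 d := by
  have cP : Fintype.card {x // x ∈ P} = n1 := by rw [Fintype.card_coe]; exact hP
  have cQ : Fintype.card {x // x ∈ Q} = n2 := by rw [Fintype.card_coe]; exact hQ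
  set eP : {x // x ∈ P} ≃ Fin n1 := Fintype.equivFinOfCardEq cP with heP
  set eQ : {x // x ∈ Q} ≃ Fin n2 := Fintype.equivFinOfCardEq cQ with heQ
  set φ : (Fin n → ZMod 2) → (Fin n1 ⊕ Fin n2 → ZMod 2) :=
    fun u => Sum.elim (fun t => u (eP.symm t) + g (eP.symm t))
      (fun t => u (eQ.symm t) + g (eQ.symm t)) with hφ
  -- distance preservation
  have hdistEq : ∀ u ∈ S, ∀ u' ∈ S, hammingDist u u' = hammingDist (φ u) (φ u') := by
    intro u hu u' hu'
    rw [hamming_eq_card, hamming_eq_card]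
    apply Finset.card_bij (i := fun (x : Fin n) (hx : x ∈ univ.filter fun x => u x ≠ u' x) =>
      if hxP : x ∈ P then Sum.inl (eP ⟨x, hxP⟩) else
        Sum.inr (eQ ⟨x, by
          rcases hdiff u hu u' hu' x (by simpa using hx) with h | h
          · exact absurd h hxP
          · exact h⟩))
    · intro x hx
      simp only [mem_filter, mem_univ, true_and] at hx
      split
      next hxP =>
        simp only [mem_filter, mem_univ, true_and, hφ, Sum.elim_inl, Equiv.symm_apply_apply]
        exact fun h => hx (add_right_cancel h)
      next hxP =>
        simp only [mem_filter, mem_univ, true_and, hφ, Sum.elim_inr, Equiv.symm_apply_apply]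
        exact fun h => hx (add_right_cancel h)
    · intro x hx y hy hxy
      by_cases hxP : x ∈ P <;> by_cases hyP : y ∈ P <;>
        simp only [hxP, hyP, dif_pos, dif_neg, not_false_iff] at hxy
      · exact Subtype.ext_iff.mp (eP.injective (Sum.inl.inj hxy))
      · exact absurd hxy (by simp)
      · exact absurd hxy (by simp)
      · exact Subtype.ext_iff.mp (eQ.injective (Sum.inr.inj hxy))
    · intro y hy
      simp only [mem_filter, mem_univ, true_and] at hy
      cases y with
      | inl t =>
        refine ⟨(eP.symm t : Fin n), ?_, ?_⟩
        · simp only [mem_filter, mem_univ, true_and]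
          intro h; apply hy; simp [hφ, h]
        · rw [dif_pos (eP.symm t).2]
          congr
          simp
      | inr t =>
        refine ⟨(eQ.symm t : Fin n), ?_, ?_⟩
        · simp only [mem_filter, mem_univ, true_and]
          intro h; apply hy; simp [hφ, h]
        · have hxQ : (eQ.symm t : Fin n) ∈ Q := (eQ.symm t).2
          have hxP : (eQ.symm t : Fin n) ∉ P := fun hp =>
            (Finset.disjoint_left.mp hPQ hp) hxQ
          rw [dif_neg hxP]
          congr
          simp
  -- injectivity of φ on S
  have hinj : Set.InjOn φ S := by
    intro u hu u' hu' h
    have h0 : hammingDist u u' = 0 := by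
      rw [hdistEq u hu u' hu', h, hammingDist_self]
    exact hammingDist_eq_zero.mp h0
  have hcard : (S.image φ).card = S.card := Finset.card_image_of_injOn hinj
  rw [← hcard]
  apply le_T_of_code
  constructor
  · intro a ha
    obtain ⟨u, hu, rfl⟩ := Finset.mem_image.mp ha
    constructor
    · rw [← hw1 u hu]
      apply Finset.card_bij (i := fun t (_ : t ∈ univ.filter fun t => φ u (Sum.inl t) = 1) =>
        (eP.symm t : Fin n))
      · intro t ht
        simp only [mem_filter, mem_univ, true_and, hφ, Sum.elim_inl] at ht
        exact Finset.mem_filter.mpr ⟨(eP.symm t).2, ht⟩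
      · intro t1 h1 t2 h2 h
        have : eP.symm t1 = eP.symm t2 := Subtype.ext h
        simpa using congrArg eP this
      · intro x hx
        obtain ⟨hxP, hx1⟩ := Finset.mem_filter.mp hx
        refine ⟨eP ⟨x, hxP⟩, ?_, by simp⟩
        simp only [mem_filter, mem_univ, true_and, hφ, Sum.elim_inl, Equiv.symm_apply_apply]
        exact hx1
    · rw [← hw2 u hu]
      apply Finset.card_bij (i := fun t (_ : t ∈ univ.filter fun t => φ u (Sum.inr t) = 1) =>
        (eQ.symm t : Fin n))
      · intro t ht
        simp only [mem_filter, mem_univ, true_and, hφ, Sum.elim_inr] at ht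
        exact Finset.mem_filter.mpr ⟨(eQ.symm t).2, ht⟩
      · intro t1 h1 t2 h2 h
        have : eQ.symm t1 = eQ.symm t2 := Subtype.ext h
        simpa using congrArg eQ this
      · intro x hx
        obtain ⟨hxQ, hx1⟩ := Finset.mem_filter.mp hx
        refine ⟨eQ ⟨x, hxQ⟩, ?_, by simp⟩
        simp only [mem_filter, mem_univ, true_and, hφ, Sum.elim_inr, Equiv.symm_apply_apply]
        exact hx1
  · intro a ha b hb hab
    obtain ⟨u, hu, rfl⟩ := Finset.mem_image.mp ha
    obtain ⟨u', hu', rfl⟩ := Finset.mem_image.mp hb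
    have huu : u ≠ u' := fun h => hab (by rw [h])
    rw [← hdistEq u hu u' hu']
    exact hdist u hu u' hu' huu

lemma zmod2_add_eq_one (a b : ZMod 2) :
    (a + b = 1) ↔ ((b = 1 ∧ ¬ a = 1) ∨ (¬ b = 1 ∧ a = 1)) := by revert a b; decide

lemma zmod2_eq_of_ne_one {a b : ZMod 2} (ha : ¬ a = 1) (hb : ¬ b = 1) : a = b := by
  revert a b; decide

lemma zmod2_eq_one_of (a b : ZMod 2) (ha : a = 1) (hb : b = 1) : a = b := by rw [ha, hb]

lemma zmod2_symm1 (g a b : ZMod 2) : (g = 1 ∧ a ≠ b) ↔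
    ((g = 1 ∧ ¬ a = 1) ∧ ¬(g = 1 ∧ ¬ b = 1)) ∨ ((g = 1 ∧ ¬ b = 1) ∧ ¬(g = 1 ∧ ¬ a = 1)) := by
  revert g a b; decide

lemma zmod2_symm2 (g a b : ZMod 2) : (¬ g = 1 ∧ a ≠ b) ↔
    ((¬ g = 1 ∧ a = 1) ∧ ¬(¬ g = 1 ∧ b = 1)) ∨ ((¬ g = 1 ∧ b = 1) ∧ ¬(¬ g = 1 ∧ a = 1)) := by
  revert g a b; decide

/-- Simple bound: `|S_{2i}(c)| ≤ T(i, w, i, n-w, d)`. -/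
lemma simple_bound {n d w i : ℕ} (C : Finset (Fin n → ZMod 2)) (hcode : IsCWCode n d w C)
    (c : Fin n → ZMod 2) (hc : c ∈ C) (hwn : w ≤ n) :
    (Sdist C c (2 * i)).card ≤ T i w i (n - w) d := by
  apply card_le_T_of (g := c) (P := univ.filter fun x => c x = 1)
    (Q := univ.filter fun x => ¬ c x = 1)
  · rw [Finset.disjoint_left]; intro a ha hb
    simp only [mem_filter] at ha hb; tauto
  · exact hcode.1 c hc
  · have h1 := Finset.card_filter_add_card_filter_not
      (s := (univ : Finset (Fin n))) (p := fun x => c x = 1)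
    have h2 : (univ : Finset (Fin n)).card = n := by simp
    have h3 : (univ.filter fun x : Fin n => c x = 1).card = w := hcode.1 c hc
    omega
  · intro u _ u' _ x _
    by_cases h : c x = 1
    · exact Or.inl (by simpa using h)
    · exact Or.inr (by simpa using h)
  · intro u hu
    obtain ⟨huC, hud⟩ := mem_Sdist.mp hu
    have := (countA c u (hcode.1 u huC) (hcode.1 c hc) hud).1
    rw [← this, AsetI]
    rw [Finset.filter_filter]
    refine congrArg Finset.card (Finset.filter_congr fun x _ => ?_)
    constructor
    · rintro ⟨hcx, hx⟩
      exact ⟨hcx, by rcases (zmod2_add_eq_one (u x) (c x)).mp hx with ⟨_, h⟩ | ⟨h, _⟩ <;> tauto⟩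
    · rintro ⟨hcx, hx⟩
      exact ⟨hcx, (zmod2_add_eq_one (u x) (c x)).mpr (Or.inl ⟨hcx, hx⟩)⟩
  · intro u hu
    obtain ⟨huC, hud⟩ := mem_Sdist.mp hu
    have := (countA c u (hcode.1 u huC) (hcode.1 c hc) hud).2
    rw [← this, AsetO]
    rw [Finset.filter_filter]
    refine congrArg Finset.card (Finset.filter_congr fun x _ => ?_)
    constructor
    · rintro ⟨hcx, hx⟩
      exact ⟨hcx, by rcases (zmod2_add_eq_one (u x) (c x)).mp hx with ⟨h, _⟩ | ⟨_, h⟩ <;> tauto⟩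
    · rintro ⟨hcx, hx⟩
      exact ⟨hcx, (zmod2_add_eq_one (u x) (c x)).mpr (Or.inr ⟨hcx, hx⟩)⟩
  · intro u hu u' hu' huu
    exact hcode.2 u (mem_Sdist.mp hu).1 u' (mem_Sdist.mp hu').1 huu

lemma AsetI_subset {n : ℕ} (c u : Fin n → ZMod 2) :
    AsetI c u ⊆ univ.filter fun x => c x = 1 := by
  intro x hx; simp only [AsetI, mem_filter] at hx ⊢; exact ⟨hx.1, hx.2.1⟩

lemma AsetO_subset {n : ℕ} (c u : Fin n → ZMod 2) :
    AsetO c u ⊆ univ.filter fun x => ¬ c x = 1 := by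
  intro x hx; simp only [AsetO, mem_filter] at hx ⊢; exact ⟨hx.1, hx.2.1⟩

lemma forced_struct {n d w i j w1 w2 : ℕ} (c u v : Fin n → ZMod 2)
    (hcu : wtOnes u = w) (hcc : wtOnes c = w) (hcv : wtOnes v = w)
    (hdu : hammingDist u c = 2 * i) (hdv : hammingDist v c = 2 * j)
    (hd : d ≤ hammingDist u v)
    (hw1 : w1 + w = i + j) (hw2 : w2 + n = i + j + w) (hwn : w ≤ n)
    (hkey : 2 * n ≤ d + 2 * (i + j)) :
    (AsetI c u ∩ AsetI c v).card = w1 ∧ (AsetO c u ∩ AsetO c v).card = w2 ∧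
    ((univ.filter fun x : Fin n => c x = 1) \ AsetI c v ⊆ AsetI c u) ∧
    ((univ.filter fun x : Fin n => ¬ c x = 1) \ AsetO c v ⊆ AsetO c u) := by
  obtain ⟨cAu, cA'u⟩ := countA c u hcu hcc hdu
  obtain ⟨cB, cB'⟩ := countA c v hcv hcc hdv
  set Au := AsetI c u
  set A'u := AsetO c u
  set B := AsetI c v
  set B' := AsetO c v
  have hsym1 : (univ.filter fun x => c x = 1 ∧ u x ≠ v x) = symmDiff Au B := by
    ext x
    simp only [mem_filter, mem_univ, true_and, Finset.mem_symmDiff, Au, B, AsetI]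
    exact zmod2_symm1 (c x) (u x) (v x)
  have hsym2 : (univ.filter fun x => ¬ c x = 1 ∧ u x ≠ v x) = symmDiff A'u B' := by
    ext x
    simp only [mem_filter, mem_univ, true_and, Finset.mem_symmDiff, A'u, B', AsetO]
    exact zmod2_symm2 (c x) (u x) (v x)
  have f1 : hammingDist u v + 2 * ((Au ∩ B).card + (A'u ∩ B').card) = 2 * (i + j) := by
    have := hamming_split c u v
    rw [hsym1, hsym2] at this
    have c1 := card_symmDiff' Au B
    have c2 := card_symmDiff' A'u B'
    omega
  have hcfn : (univ.filter fun x : Fin n => c x = 1).card = w := hcc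
  have hcompl : (univ.filter fun x : Fin n => ¬ c x = 1).card = n - w := by
    have h1 := Finset.card_filter_add_card_filter_not
      (s := (univ : Finset (Fin n))) (p := fun x => c x = 1)
    have h2 : (univ : Finset (Fin n)).card = n := by simp
    omega
  have f2 : i + j ≤ (Au ∩ B).card + w := by
    have h1 := Finset.card_inter_add_card_union Au B
    have h2 : (Au ∪ B).card ≤ w := by
      rw [← hcfn]
      exact Finset.card_le_card (Finset.union_subset (AsetI_subset c u) (AsetI_subset c v))
    omega
  have f3 : i + j + w ≤ (A'u ∩ B').card + n := by
    have h1 := Finset.card_inter_add_card_union A'u B'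
    have h2 : (A'u ∪ B').card ≤ n - w := by
      rw [← hcompl]
      exact Finset.card_le_card (Finset.union_subset (AsetO_subset c u) (AsetO_subset c v))
    omega
  have hX : (Au ∩ B).card = w1 := by omega
  have hY : (A'u ∩ B').card = w2 := by omega
  refine ⟨hX, hY, ?_, ?_⟩
  · have e1 : (Au \ B).card + (Au ∩ B).card = Au.card := Finset.card_sdiff_add_card_inter Au B
    have e2 : ((univ.filter fun x : Fin n => c x = 1) \ B).card = w - (B).card := by
      rw [Finset.card_sdiff_of_subset (AsetI_subset c v), hcfn]
    have e3 : Au \ B ⊆ (univ.filter fun x : Fin n => c x = 1) \ B :=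
      Finset.sdiff_subset_sdiff (AsetI_subset c u) (le_refl B)
    have e4 := Finset.eq_of_subset_of_card_le e3 (by omega)
    rw [← e4]
    exact Finset.sdiff_subset
  · have e1 : (A'u \ B').card + (A'u ∩ B').card = A'u.card :=
      Finset.card_sdiff_add_card_inter A'u B'
    have e2 : ((univ.filter fun x : Fin n => ¬ c x = 1) \ B').card = (n - w) - B'.card := by
      rw [Finset.card_sdiff_of_subset (AsetO_subset c v), hcompl]
    have e3 : A'u \ B' ⊆ (univ.filter fun x : Fin n => ¬ c x = 1) \ B' :=
      Finset.sdiff_subset_sdiff (AsetO_subset c u) (le_refl B')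
    have e4 := Finset.eq_of_subset_of_card_le e3 (by omega)
    rw [← e4]
    exact Finset.sdiff_subset

lemma cross_bound {n d w i j w1 w2 : ℕ} (C : Finset (Fin n → ZMod 2))
    (hcode : IsCWCode n d w C) (c : Fin n → ZMod 2) (hc : c ∈ C)
    (hw1 : w1 + w = i + j) (hw2 : w2 + n = i + j + w) (hwn : w ≤ n)
    (hkey : 2 * n ≤ d + 2 * (i + j)) (hne : i ≠ j)
    (v : Fin n → ZMod 2) (hv : v ∈ Sdist C c (2 * j)) :
    (Sdist C c (2 * i)).card ≤ T w1 j w2 j d := by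
  obtain ⟨hvC, hvd⟩ := mem_Sdist.mp hv
  have wtc : wtOnes c = w := hcode.1 c hc
  have wtv : wtOnes v = w := hcode.1 v hvC
  obtain ⟨cB, cB'⟩ := countA c v wtv wtc hvd
  -- basic facts for each u in S
  have main : ∀ u ∈ Sdist C c (2 * i),
      (AsetI c u ∩ AsetI c v).card = w1 ∧ (AsetO c u ∩ AsetO c v).card = w2 ∧
      ((univ.filter fun x : Fin n => c x = 1) \ AsetI c v ⊆ AsetI c u) ∧
      ((univ.filter fun x : Fin n => ¬ c x = 1) \ AsetO c v ⊆ AsetO c u) := by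
    intro u hu
    obtain ⟨huC, hud⟩ := mem_Sdist.mp hu
    have huv : u ≠ v := by
      intro h; rw [h, hvd] at hud; omega
    exact forced_struct c u v (hcode.1 u huC) wtc wtv hud hvd
      (hcode.2 u huC v hvC huv) hw1 hw2 hwn hkey
  apply card_le_T_of (g := c) (P := AsetI c v) (Q := AsetO c v)
  · rw [Finset.disjoint_left]; intro a ha hb
    simp only [AsetI, AsetO, mem_filter] at ha hb; tauto
  · exact cB
  · exact cB'
  · intro u hu u' hu' x hx
    obtain ⟨_, _, hf1, hf2⟩ := main u hu
    obtain ⟨_, _, hf1', hf2'⟩ := main u' hu'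
    by_cases hcx : c x = 1
    · by_cases hxB : x ∈ AsetI c v
      · exact Or.inl hxB
      · exfalso
        have hxm : x ∈ (univ.filter fun x : Fin n => c x = 1) \ AsetI c v := by
          simp only [Finset.mem_sdiff, mem_filter, mem_univ, true_and]; exact ⟨hcx, hxB⟩
        have h1 := hf1 hxm
        have h2 := hf1' hxm
        simp only [AsetI, mem_filter] at h1 h2
        exact hx (zmod2_eq_of_ne_one h1.2.2 h2.2.2)
    · by_cases hxB : x ∈ AsetO c v
      · exact Or.inr hxB
      · exfalso
        have hxm : x ∈ (univ.filter fun x : Fin n => ¬ c x = 1) \ AsetO c v := by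
          simp only [Finset.mem_sdiff, mem_filter, mem_univ, true_and]; exact ⟨hcx, hxB⟩
        have h1 := hf2 hxm
        have h2 := hf2' hxm
        simp only [AsetO, mem_filter] at h1 h2
        exact hx (zmod2_eq_one_of _ _ h1.2.2 h2.2.2)
  · intro u hu
    obtain ⟨hX, _, _, _⟩ := main u hu
    rw [← hX]
    refine congrArg Finset.card ?_
    ext x
    simp only [mem_filter, Finset.mem_inter, AsetI, mem_filter, mem_univ, true_and]
    constructor
    · rintro ⟨⟨hcx, hvx⟩, hadd⟩
      refine ⟨⟨hcx, ?_⟩, hcx, hvx⟩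
      rcases (zmod2_add_eq_one (u x) (c x)).mp hadd with ⟨_, h⟩ | ⟨h, _⟩
      · exact h
      · exact absurd hcx h
    · rintro ⟨⟨hcx, hux⟩, _, hvx⟩
      exact ⟨⟨hcx, hvx⟩, (zmod2_add_eq_one (u x) (c x)).mpr (Or.inl ⟨hcx, hux⟩)⟩
  · intro u hu
    obtain ⟨_, hY, _, _⟩ := main u hu
    rw [← hY]
    refine congrArg Finset.card ?_
    ext x
    simp only [mem_filter, Finset.mem_inter, AsetO, mem_filter, mem_univ, true_and]
    constructor
    · rintro ⟨⟨hcx, hvx⟩, hadd⟩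
      refine ⟨⟨hcx, ?_⟩, hcx, hvx⟩
      rcases (zmod2_add_eq_one (u x) (c x)).mp hadd with ⟨h, _⟩ | ⟨_, h⟩
      · exact absurd h hcx
      · exact h
    · rintro ⟨⟨hcx, hux⟩, _, hvx⟩
      exact ⟨⟨hcx, hvx⟩, (zmod2_add_eq_one (u x) (c x)).mpr (Or.inr ⟨hcx, hux⟩)⟩
  · intro u hu u' hu' huu
    exact hcode.2 u (mem_Sdist.mp hu).1 u' (mem_Sdist.mp hu').1 huu

lemma card_val_filter {n : ℕ} (p : ℕ → Prop) [DecidablePred p] :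
    (univ.filter fun x : Fin n => p x.val).card = ((range n).filter p).card := by
  apply Finset.card_bij (i := fun (x : Fin n) _ => x.val)
  · intro x hx
    simp only [mem_filter, mem_univ, true_and] at hx
    exact Finset.mem_filter.mpr ⟨Finset.mem_range.mpr x.isLt, hx⟩
  · intro x _ y _ h; exact Fin.val_injective h
  · intro y hy
    obtain ⟨hyn, hpy⟩ := Finset.mem_filter.mp hy
    exact ⟨⟨y, Finset.mem_range.mp hyn⟩, by simpa using hpy, rfl⟩

lemma card_range_filter_int4 {n a1 b1 a2 b2 a3 b3 a4 b4 : ℕ} (p : ℕ → Prop) [DecidablePred p]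
    (o1 : a1 ≤ b1) (o2 : b1 ≤ a2) (o3 : a2 ≤ b2) (o4 : b2 ≤ a3) (o5 : a3 ≤ b3)
    (o6 : b3 ≤ a4) (o7 : a4 ≤ b4) (o8 : b4 ≤ n)
    (hp : ∀ x, x < n → (p x ↔ ((a1 ≤ x ∧ x < b1) ∨ (a2 ≤ x ∧ x < b2) ∨
      (a3 ≤ x ∧ x < b3) ∨ (a4 ≤ x ∧ x < b4)))) :
    ((range n).filter p).card = (b1 - a1) + (b2 - a2) + (b3 - a3) + (b4 - a4) := by
  have he : (range n).filter p = Ico a1 b1 ∪ (Ico a2 b2 ∪ (Ico a3 b3 ∪ Ico a4 b4)) := by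
    ext x
    simp only [mem_filter, mem_range, mem_union, mem_Ico]
    constructor
    · rintro ⟨hxn, hpx⟩; exact (hp x hxn).mp hpx
    · intro h
      have hxn : x < n := by omega
      exact ⟨hxn, (hp x hxn).mpr h⟩
  have d34 : Disjoint (Ico a3 b3) (Ico a4 b4) := by
    rw [Finset.disjoint_left]; intro x h1 h2
    simp only [mem_Ico] at h1 h2; omega
  have d234 : Disjoint (Ico a2 b2) (Ico a3 b3 ∪ Ico a4 b4) := by
    rw [Finset.disjoint_left]; intro x h1 h2
    simp only [mem_union, mem_Ico] at h1 h2; omega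
  have d1234 : Disjoint (Ico a1 b1) (Ico a2 b2 ∪ (Ico a3 b3 ∪ Ico a4 b4)) := by
    rw [Finset.disjoint_left]; intro x h1 h2
    simp only [mem_union, mem_Ico] at h1 h2; omega
  rw [he, Finset.card_union_of_disjoint d1234, Finset.card_union_of_disjoint d234,
    Finset.card_union_of_disjoint d34, Nat.card_Ico, Nat.card_Ico, Nat.card_Ico, Nat.card_Ico]
  omega

lemma ind_eq_one (P : Prop) [Decidable P] : ((if P then (1 : ZMod 2) else 0) = 1) ↔ P := by
  split <;> simp_all

lemma ind_ne_ind (P Q : Prop) [Decidable P] [Decidable Q] :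
    ((if P then (1 : ZMod 2) else 0) ≠ (if Q then (1 : ZMod 2) else 0)) ↔ ¬(P ↔ Q) := by
  by_cases hP : P <;> by_cases hQ : Q <;> simp_all

lemma mem_Vset_of {n w i : ℕ} (p : ℕ → Prop) [DecidablePred p]
    (h1 : ((range n).filter fun y => y < w ∧ p y).card = i)
    (h2 : ((range n).filter fun y => w ≤ y ∧ p y).card = i) :
    (fun x : Fin n => if p x.val then (1 : ZMod 2) else 0) ∈ Vset n w i := by
  rw [Vset, mem_filter]
  refine ⟨mem_univ _, ?_, ?_⟩
  · rw [← h1, ← card_val_filter]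
    exact congrArg Finset.card (Finset.filter_congr fun x _ => by rw [ind_eq_one])
  · rw [← h2, ← card_val_filter]
    exact congrArg Finset.card (Finset.filter_congr fun x _ => by rw [ind_eq_one])

lemma hamming_ind {n : ℕ} (p q : ℕ → Prop) [DecidablePred p] [DecidablePred q] :
    hammingDist (fun x : Fin n => if p x.val then (1 : ZMod 2) else 0)
      (fun x : Fin n => if q x.val then (1 : ZMod 2) else 0)
      = ((range n).filter fun y => ¬(p y ↔ q y)).card := by
  rw [hamming_eq_card, ← card_val_filter]
  exact congrArg Finset.card (Finset.filter_congr fun x _ => by rw [ind_ne_ind])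

lemma key_facts {n d w i j : ℕ} (hd : Even d) (hdw : d < 2 * w) (hwn : 2 * w ≤ n)
    (hdi : d / 2 ≤ i) (hiw : i ≤ w) (hdj : d / 2 ≤ j) (hjw : j ≤ w) (hij : i ≠ j)
    (hm : mMax n w i j = d) :
    w < i + j ∧ n < w + (i + j) ∧ 2 * n ≤ d + 2 * (i + j) := by
  set m1 := min i (w - j) with hm1
  set m2 := min (w + i) (n - j) with hm2
  set p : ℕ → Prop := fun y => y < i ∨ (w ≤ y ∧ y < w + i) with hp
  set q : ℕ → Prop := fun y => (m1 ≤ y ∧ y < m1 + j) ∨ (m2 ≤ y ∧ y < m2 + j) with hq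
  have hu : (fun x : Fin n => if p x.val then (1 : ZMod 2) else 0) ∈ Vset n w i := by
    apply mem_Vset_of
    · rw [card_range_filter_int4 (a1 := 0) (b1 := i) (a2 := n) (b2 := n) (a3 := n) (b3 := n)
        (a4 := n) (b4 := n) _ (by omega) (by omega) (by omega) (by omega) (by omega)
        (by omega) (by omega) (by omega) (fun x hx => by simp only [hp]; omega)]
      omega
    · rw [card_range_filter_int4 (a1 := w) (b1 := w + i) (a2 := n) (b2 := n) (a3 := n) (b3 := n)
        (a4 := n) (b4 := n) _ (by omega) (by omega) (by omega) (by omega) (by omega)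
        (by omega) (by omega) (by omega) (fun x hx => by simp only [hp]; omega)]
      omega
  have hv : (fun x : Fin n => if q x.val then (1 : ZMod 2) else 0) ∈ Vset n w j := by
    apply mem_Vset_of
    · rw [card_range_filter_int4 (a1 := m1) (b1 := m1 + j) (a2 := n) (b2 := n) (a3 := n)
        (b3 := n) (a4 := n) (b4 := n) _ (by omega) (by omega) (by omega) (by omega) (by omega)
        (by omega) (by omega) (by omega) (fun x hx => by simp only [hq]; omega)]
      omega
    · rw [card_range_filter_int4 (a1 := m2) (b1 := m2 + j) (a2 := n) (b2 := n) (a3 := n)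
        (b3 := n) (a4 := n) (b4 := n) _ (by omega) (by omega) (by omega) (by omega) (by omega)
        (by omega) (by omega) (by omega) (fun x hx => by simp only [hq]; omega)]
      omega
  have hle : hammingDist (fun x : Fin n => if p x.val then (1 : ZMod 2) else 0)
      (fun x : Fin n => if q x.val then (1 : ZMod 2) else 0) ≤ mMax n w i j := by
    rw [mMax]
    exact Finset.le_sup
      (b := ((fun x : Fin n => if p x.val then (1 : ZMod 2) else 0),
             (fun x : Fin n => if q x.val then (1 : ZMod 2) else 0)))
      (f := fun pr => hammingDist pr.1 pr.2)
      (Finset.mem_product.mpr ⟨hu, hv⟩)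
  rw [hamming_ind] at hle
  rw [card_range_filter_int4 (a1 := 0) (b1 := m1) (a2 := i) (b2 := m1 + j) (a3 := w)
    (b3 := m2) (a4 := w + i) (b4 := m2 + j) _ (by omega) (by omega) (by omega) (by omega)
    (by omega) (by omega) (by omega) (by omega)
    (fun x hx => by simp only [hp, hq]; omega)] at hle
  rw [hm] at hle
  obtain ⟨e, he⟩ := hd
  omega

lemma pointwise_one (Pi Pj Pij Pji a b : ℚ) (hPi : 0 < Pi) (hPj : 0 < Pj)
    (hPij : 0 < Pij) (hPji : 0 < Pji)
    (ha0 : 0 ≤ a) (hb0 : 0 ≤ b) (ha : a ≤ Pi) (hb : b ≤ Pj)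
    (hab : 0 < b → a ≤ Pij) (hba : 0 < a → b ≤ Pji)
    (h1 : 1 ≤ Pij / Pi + Pji / Pj) :
    (Pj - Pji) / (Pj * Pij) * a + (1 / Pj) * b ≤ 1 := by
  have h1' : Pi * Pj ≤ Pij * Pj + Pji * Pi := by
    rw [div_add_div _ _ (ne_of_gt hPi) (ne_of_gt hPj), one_le_div (by positivity)] at h1
    linarith
  have key : (Pj - Pji) * a + Pij * b ≤ Pj * Pij := by
    rcases eq_or_lt_of_le hb0 with hb0' | hbpos
    · rcases le_or_gt Pj Pji with h | h
      · nlinarith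
      · nlinarith [mul_le_mul_of_nonneg_left ha (le_of_lt (sub_pos.mpr h))]
    · have haPij := hab hbpos
      rcases eq_or_lt_of_le ha0 with ha0' | hapos
      · nlinarith
      · have hbPji := hba hapos
        rcases le_or_gt Pji Pj with h | h
        · nlinarith [mul_le_mul_of_nonneg_left haPij (sub_nonneg.mpr h),
            mul_le_mul_of_nonneg_left hbPji hPij.le]
        · nlinarith [mul_le_mul_of_nonneg_left hb hPij.le]
  have heq : (Pj - Pji) / (Pj * Pij) * a + (1 / Pj) * b
      = ((Pj - Pji) * a + Pij * b) / (Pj * Pij) := by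
    field_simp
  rw [heq, div_le_one (by positivity)]
  exact key

lemma pointwise_three (Pi Pj Pij Pji a b : ℚ) (hPi : 0 < Pi) (hPj : 0 < Pj)
    (hPij : 0 < Pij) (hPji : 0 < Pji)
    (ha0 : 0 ≤ a) (hb0 : 0 ≤ b) (ha : a ≤ Pi) (hb : b ≤ Pj)
    (hab : 0 < b → a ≤ Pij) (hba : 0 < a → b ≤ Pji)
    (h3 : Pij / Pi + Pji / Pj ≤ 1) :
    (1 / Pi) * a + (1 / Pj) * b ≤ 1 := by
  have h3' : Pij * Pj + Pji * Pi ≤ Pi * Pj := by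
    rw [div_add_div _ _ (ne_of_gt hPi) (ne_of_gt hPj), div_le_one (by positivity)] at h3
    linarith
  have key : a * Pj + b * Pi ≤ Pi * Pj := by
    rcases eq_or_lt_of_le hb0 with hb0' | hbpos
    · nlinarith [mul_le_mul_of_nonneg_right ha hPj.le]
    · rcases eq_or_lt_of_le ha0 with ha0' | hapos
      · nlinarith [mul_le_mul_of_nonneg_right hb hPi.le]
      · nlinarith [mul_le_mul_of_nonneg_right (hab hbpos) hPj.le,
          mul_le_mul_of_nonneg_right (hba hapos) hPi.le]
  have heq : (1 / Pi) * a + (1 / Pj) * b = (a * Pj + b * Pi) / (Pi * Pj) := by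
    field_simp
  rw [heq, div_le_one (by positivity)]
  exact key

lemma avg_le_one {n : ℕ} (C : Finset (Fin n → ZMod 2)) (hC : C.Nonempty) (i j : ℕ) (α β : ℚ)
    (h : ∀ c ∈ C, α * ((Sdist C c i).card : ℚ) + β * ((Sdist C c j).card : ℚ) ≤ 1) :
    α * distDistr C i + β * distDistr C j ≤ 1 := by
  have hN : (0 : ℚ) < (C.card : ℚ) := by
    exact_mod_cast Finset.card_pos.mpr hC
  rw [distDistr, distDistr]
  have heq : α * ((∑ c ∈ C, ((Sdist C c i).card : ℚ)) / (C.card : ℚ))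
      + β * ((∑ c ∈ C, ((Sdist C c j).card : ℚ)) / (C.card : ℚ))
      = (∑ c ∈ C, (α * ((Sdist C c i).card : ℚ) + β * ((Sdist C c j).card : ℚ)))
        / (C.card : ℚ) := by
    rw [Finset.sum_add_distrib, ← Finset.mul_sum, ← Finset.mul_sum]
    ring
  rw [heq, div_le_one hN]
  calc ∑ c ∈ C, (α * ((Sdist C c i).card : ℚ) + β * ((Sdist C c j).card : ℚ))
      ≤ ∑ _c ∈ C, (1 : ℚ) := Finset.sum_le_sum h
    _ = (C.card : ℚ) := by simp
/-- For a nonempty `(n,d,w)` constant-weight code `C` (`d` even,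
`d < 2w ≤ n`) with distance distribution `{A_{2i}}`, `i ≠ j` in `H` with
`m_{i,j} = d`, and positive integers `P_i, P_j, P_{ij}, P_{ji}` as described, the
three conditional inequalities hold. -/
theorem distDistr_equality_case (n d w i j : ℕ) (C : Finset (Fin n → ZMod 2)) (hC : C.Nonempty)
    (hcode : IsCWCode n d w C) (hd : Even d) (hdw : d < 2 * w) (hwn : 2 * w ≤ n)
    (hi : i ∈ Finset.Icc (d / 2) w) (hj : j ∈ Finset.Icc (d / 2) w) (hij : i ≠ j)
    (hm : mMax n w i j = d)
    (Pi Pj Pij Pji : ℤ) (hPi0 : 0 < Pi) (hPj0 : 0 < Pj) (hPij0 : 0 < Pij) (hPji0 : 0 < Pji)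
    (hPi : (T i w i (n - w) d : ℤ) ≤ Pi) (hPj : (T j w j (n - w) d : ℤ) ≤ Pj)
    (hPji : (T (((i : ℤ) + j - (w : ℤ)).natAbs)
        (if w < i + j then i else w - i)
        (((i : ℤ) + j - ((n - w : ℕ) : ℤ)).natAbs)
        (if n - w < i + j then i else (n - w) - i) d : ℤ) ≤ Pji)
    (hPij : (T (((j : ℤ) + i - (w : ℤ)).natAbs)
        (if w < j + i then j else w - j)
        (((j : ℤ) + i - ((n - w : ℕ) : ℤ)).natAbs)
        (if n - w < j + i then j else (n - w) - j) d : ℤ) ≤ Pij) :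
    ((1 : ℚ) ≤ (Pij : ℚ) / (Pi : ℚ) + (Pji : ℚ) / (Pj : ℚ) →
      (((Pj : ℚ) - (Pji : ℚ)) / ((Pj : ℚ) * (Pij : ℚ))) * distDistr C (2 * i) +
        (1 / (Pj : ℚ)) * distDistr C (2 * j) ≤ 1) ∧
    ((1 : ℚ) ≤ (Pij : ℚ) / (Pi : ℚ) + (Pji : ℚ) / (Pj : ℚ) →
      (1 / (Pi : ℚ)) * distDistr C (2 * i) +
        (((Pi : ℚ) - (Pij : ℚ)) / ((Pi : ℚ) * (Pji : ℚ))) * distDistr C (2 * j) ≤ 1) ∧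
    ((Pij : ℚ) / (Pi : ℚ) + (Pji : ℚ) / (Pj : ℚ) ≤ 1 →
      (1 / (Pi : ℚ)) * distDistr C (2 * i) +
        (1 / (Pj : ℚ)) * distDistr C (2 * j) ≤ 1) := by
  -- setup
  obtain ⟨hdi, hiw⟩ := Finset.mem_Icc.mp hi
  obtain ⟨hdj, hjw⟩ := Finset.mem_Icc.mp hj
  have hwn' : w ≤ n := by omega
  obtain ⟨Kw, Kn, Kd⟩ := key_facts hd hdw hwn hdi hiw hdj hjw hij hm
  -- rewrite the T-arguments in hPij, hPji
  have e1 : (((j : ℤ) + i - (w : ℤ)).natAbs) = i + j - w := by omega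
  have e2 : (if w < j + i then j else w - j) = j := if_pos (by omega)
  have e3 : (((j : ℤ) + i - ((n - w : ℕ) : ℤ)).natAbs) = i + j + w - n := by omega
  have e4 : (if n - w < j + i then j else (n - w) - j) = j := if_pos (by omega)
  rw [e1, e2, e3, e4] at hPij
  have f1 : (((i : ℤ) + j - (w : ℤ)).natAbs) = i + j - w := by omega
  have f2 : (if w < i + j then i else w - i) = i := if_pos (by omega)
  have f3 : (((i : ℤ) + j - ((n - w : ℕ) : ℤ)).natAbs) = i + j + w - n := by omega
  have f4 : (if n - w < i + j then i else (n - w) - i) = i := if_pos (by omega)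
  rw [f1, f2, f3, f4] at hPji
  -- cast positivity
  have qPi : (0 : ℚ) < (Pi : ℚ) := by exact_mod_cast hPi0
  have qPj : (0 : ℚ) < (Pj : ℚ) := by exact_mod_cast hPj0
  have qPij : (0 : ℚ) < (Pij : ℚ) := by exact_mod_cast hPij0
  have qPji : (0 : ℚ) < (Pji : ℚ) := by exact_mod_cast hPji0
  -- per-codeword constraints
  have hcon : ∀ c ∈ C,
      (0 : ℚ) ≤ ((Sdist C c (2 * i)).card : ℚ) ∧
      (0 : ℚ) ≤ ((Sdist C c (2 * j)).card : ℚ) ∧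
      ((Sdist C c (2 * i)).card : ℚ) ≤ (Pi : ℚ) ∧
      ((Sdist C c (2 * j)).card : ℚ) ≤ (Pj : ℚ) ∧
      (0 < ((Sdist C c (2 * j)).card : ℚ) → ((Sdist C c (2 * i)).card : ℚ) ≤ (Pij : ℚ)) ∧
      (0 < ((Sdist C c (2 * i)).card : ℚ) → ((Sdist C c (2 * j)).card : ℚ) ≤ (Pji : ℚ)) := by
    intro c hc
    refine ⟨by positivity, by positivity, ?_, ?_, ?_, ?_⟩
    · have h1 := simple_bound (i := i) C hcode c hc hwn'
      have h2 : ((Sdist C c (2 * i)).card : ℤ) ≤ Pi :=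
        le_trans (by exact_mod_cast h1) hPi
      exact_mod_cast h2
    · have h1 := simple_bound C hcode c hc hwn' (i := j)
      have h2 : ((Sdist C c (2 * j)).card : ℤ) ≤ Pj :=
        le_trans (by exact_mod_cast h1) hPj
      exact_mod_cast h2
    · intro hbpos
      have hne : (Sdist C c (2 * j)).Nonempty := by
        rw [← Finset.card_pos]; exact_mod_cast hbpos
      obtain ⟨v, hv⟩ := hne
      have h1 := cross_bound (w1 := i + j - w) (w2 := i + j + w - n) C hcode c hc
        (by omega) (by omega) hwn' (by omega) hij v hv
      have h2 : ((Sdist C c (2 * i)).card : ℤ) ≤ Pij :=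
        le_trans (by exact_mod_cast h1) hPij
      exact_mod_cast h2
    · intro hapos
      have hne : (Sdist C c (2 * i)).Nonempty := by
        rw [← Finset.card_pos]; exact_mod_cast hapos
      obtain ⟨v, hv⟩ := hne
      have h1 := cross_bound (i := j) (j := i) (w1 := i + j - w) (w2 := i + j + w - n)
        C hcode c hc (by omega) (by omega) hwn' (by omega) (Ne.symm hij) v hv
      have h2 : ((Sdist C c (2 * j)).card : ℤ) ≤ Pji :=
        le_trans (by exact_mod_cast h1) hPji
      exact_mod_cast h2
  refine ⟨?_, ?_, ?_⟩
  · intro h1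
    apply avg_le_one C hC _ _ _ _ ?_
    intro c hc
    obtain ⟨ha0, hb0, ha, hb, hab, hba⟩ := hcon c hc
    exact pointwise_one _ _ _ _ _ _ qPi qPj qPij qPji ha0 hb0 ha hb hab hba h1
  · intro h1
    have h1' : 1 ≤ (Pji : ℚ) / (Pj : ℚ) + (Pij : ℚ) / (Pi : ℚ) := by linarith
    have := avg_le_one C hC (2 * j) (2 * i)
      (((Pi : ℚ) - (Pij : ℚ)) / ((Pi : ℚ) * (Pji : ℚ))) (1 / (Pi : ℚ)) ?_
    · linarith
    intro c hc
    obtain ⟨ha0, hb0, ha, hb, hab, hba⟩ := hcon c hc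
    exact pointwise_one _ _ _ _ _ _ qPj qPi qPji qPij hb0 ha0 hb ha hba hab h1'
  · intro h3
    apply avg_le_one C hC _ _ _ _ ?_
    intro c hc
    obtain ⟨ha0, hb0, ha, hb, hab, hba⟩ := hcon c hc
    exact pointwise_three _ _ _ _ _ _ qPi qPj qPij qPji ha0 hb0 ha hb hab hba h3
end

section
/- (1-row k-column formula) Let C be a nonempty (n,d,w) constant-weight code of size M, viewed as an M × n matrix over F = {0,1} whose rows are the codewords. Then for each k = 1, 2, …, M, Σ_{{u1',…,uk'}} wt(u1' + ⋯ + uk') = M · P_k^−(n; w), where the sum is taken over all k-element sets {u1',…,uk'} of distinct columns of C, the column sum is taken modulo 2 componentwise, and wt denotes the number of ones of a vector in F^M. -/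

lemma cast_eq_one_iff_odd (m : ℕ) : (m : ZMod 2) = 1 ↔ Odd m := by
  rw [Nat.odd_iff, ← ZMod.natCast_mod m 2, ← Nat.cast_one (R := ZMod 2)]
  constructor
  · intro h
    have := (ZMod.natCast_eq_natCast_iff' _ _ _).mp h
    simpa using this
  · intro h; rw [h]

lemma count_inter {α : Type*} [Fintype α] [DecidableEq α] (A : Finset α) (k j : ℕ)
    (hj : j ≤ k) :
    (((Finset.univ : Finset α).powersetCard k).filter
        (fun S => (S ∩ A).card = j)).card
      = A.card.choose j * Aᶜ.card.choose (k - j) := by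
  rw [← Finset.card_powersetCard, ← Finset.card_powersetCard, ← Finset.card_product]
  apply Finset.card_bij' (fun S _ => (S ∩ A, S \ A)) (fun p _ => p.1 ∪ p.2)
  · intro S hS
    simp only [Finset.mem_filter, Finset.mem_powersetCard] at hS
    obtain ⟨⟨_, hcard⟩, hj'⟩ := hS
    simp only [Finset.mem_product, Finset.mem_powersetCard]
    refine ⟨⟨Finset.inter_subset_right, hj'⟩, ?_, ?_⟩
    · intro x hx
      simp only [Finset.mem_sdiff] at hx
      simp [hx.2]
    · have : (S ∩ A).card + (S \ A).card = S.card := Finset.card_inter_add_card_sdiff S A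
      omega
  · intro p hp
    simp only [Finset.mem_product, Finset.mem_powersetCard] at hp
    obtain ⟨⟨h1, h1c⟩, h2, h2c⟩ := hp
    have hdisj : Disjoint p.1 p.2 := by
      apply Finset.disjoint_left.mpr
      intro x hx1 hx2
      exact absurd (h1 hx1) (by simpa using h2 hx2)
    simp only [Finset.mem_filter, Finset.mem_powersetCard]
    refine ⟨⟨Finset.subset_univ _, ?_⟩, ?_⟩
    · rw [Finset.card_union_of_disjoint hdisj, h1c, h2c]; omega
    · have : (p.1 ∪ p.2) ∩ A = p.1 := by
        rw [Finset.union_inter_distrib_right, Finset.inter_eq_left.mpr h1]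
        have : p.2 ∩ A = ∅ := by
          apply Finset.eq_empty_of_forall_notMem
          intro x hx
          simp only [Finset.mem_inter] at hx
          exact absurd hx.2 (by simpa using h2 hx.1)
        rw [this, Finset.union_empty]
      rw [this, h1c]
  · intro S hS
    ext x
    simp only [Finset.mem_union, Finset.mem_inter, Finset.mem_sdiff]
    tauto
  · intro p hp
    simp only [Finset.mem_product, Finset.mem_powersetCard] at hp
    obtain ⟨⟨h1, _⟩, h2, _⟩ := hp
    have h2A : ∀ x ∈ p.2, x ∉ A := fun x hx => by simpa using h2 hx
    refine Prod.ext ?_ ?_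
    · show (p.1 ∪ p.2) ∩ A = p.1
      ext x
      simp only [Finset.mem_inter, Finset.mem_union]
      constructor
      · rintro ⟨h | h, hA⟩
        · exact h
        · exact absurd hA (h2A x h)
      · intro h; exact ⟨Or.inl h, h1 h⟩
    · show (p.1 ∪ p.2) \ A = p.2
      ext x
      simp only [Finset.mem_sdiff, Finset.mem_union]
      constructor
      · rintro ⟨h | h, hA⟩
        · exact absurd (h1 h) hA
        · exact h
      · intro h; exact ⟨Or.inr h, h2A x h⟩

lemma per_codeword (n w k : ℕ) (c : Fin n → ZMod 2) (hw : wtOnes c = w) :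
    (((Finset.univ : Finset (Fin n)).powersetCard k).filter
        (fun S => (∑ t ∈ S, c t) = 1)).card = Pminus k n w := by
  classical
  set A : Finset (Fin n) := Finset.univ.filter (fun t => c t = 1) with hA
  have hAcard : A.card = w := hw
  have hAc : Aᶜ.card = n - w := by
    have := Finset.card_compl A
    simpa [hAcard] using this
  have hsum : ∀ S : Finset (Fin n), (∑ t ∈ S, c t) = (((S ∩ A).card : ℕ) : ZMod 2) := by
    intro S
    have hsplit : S = (S ∩ A) ∪ (S \ A) := by
      ext x; simp only [Finset.mem_union, Finset.mem_inter, Finset.mem_sdiff]; tauto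
    have hdisj : Disjoint (S ∩ A) (S \ A) := by
      apply Finset.disjoint_left.mpr
      intro x hx1 hx2
      simp only [Finset.mem_inter, hA, Finset.mem_filter] at hx1
      simp only [Finset.mem_sdiff, hA, Finset.mem_filter] at hx2
      exact hx2.2 ⟨Finset.mem_univ x, hx1.2.2⟩
    rw [hsplit, Finset.sum_union hdisj]
    have h1 : ∑ t ∈ S ∩ A, c t = ((S ∩ A).card : ZMod 2) := by
      rw [Finset.sum_congr rfl (fun t ht => ?_), Finset.sum_const, nsmul_eq_mul, mul_one]
      simp only [Finset.mem_inter, hA, Finset.mem_filter] at ht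
      exact ht.2.2
    have h2 : ∑ t ∈ S \ A, c t = 0 := by
      apply Finset.sum_eq_zero
      intro t ht
      simp only [Finset.mem_sdiff, hA, Finset.mem_filter] at ht
      have : c t = 0 ∨ c t = 1 := by
        have : ∀ x : ZMod 2, x = 0 ∨ x = 1 := by decide
        exact this _
      rcases this with h | h
      · exact h
      · exact absurd ⟨Finset.mem_univ t, h⟩ ht.2
    rw [h1, h2, add_zero, ← hsplit]
  have hcond : ∀ S : Finset (Fin n), ((∑ t ∈ S, c t) = 1) ↔ Odd (S ∩ A).card := by
    intro S
    rw [hsum S, cast_eq_one_iff_odd]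
  rw [Finset.filter_congr (fun S _ => by rw [hcond S])]
  rw [Finset.card_eq_sum_card_fiberwise
    (f := fun S => (S ∩ A).card) (t := Finset.range (k + 1)) ?_]
  · unfold Pminus
    apply Finset.sum_congr rfl
    intro j hj
    rw [Finset.mem_range] at hj
    rw [Finset.filter_filter]
    by_cases hoj : Odd j
    · rw [if_pos hoj]
      have : (((Finset.univ : Finset (Fin n)).powersetCard k).filter
          (fun S => Odd (S ∩ A).card ∧ (S ∩ A).card = j))
          = ((Finset.univ : Finset (Fin n)).powersetCard k).filter
            (fun S => (S ∩ A).card = j) := by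
        apply Finset.filter_congr
        intro S _
        constructor
        · exact fun h => h.2
        · exact fun h => ⟨h ▸ hoj, h⟩
      rw [this, count_inter A k j (by omega), hAcard, hAc]
    · rw [if_neg hoj]
      rw [Finset.card_eq_zero]
      apply Finset.filter_false_of_mem
      intro S _
      rintro ⟨h1, h2⟩
      exact hoj (h2 ▸ h1)
  · intro S hS
    simp only [Finset.mem_coe, Finset.mem_filter, Finset.mem_powersetCard] at hS
    obtain ⟨⟨_, hSk⟩, _⟩ := hS
    simp only [Finset.mem_coe, Finset.mem_range]
    have : (S ∩ A).card ≤ S.card := Finset.card_le_card Finset.inter_subset_left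
    omega

/-- 1-row k-column formula: For a nonempty `(n,d,w)` constant-weight
code `C` of size `M`, viewed as an `M × n` binary matrix, and each `k = 1, …, M`,
the sum over all `k`-element sets of columns of the weight of their (mod 2) sum
equals `M · P⁻_k(n;w)`. -/
theorem one_row_k_column (n d w : ℕ) (C : Finset (Fin n → ZMod 2)) (hC : C.Nonempty)
    (hcode : IsCWCode n d w C) (k : ℕ) (hk1 : 1 ≤ k) (hk2 : k ≤ C.card) :
    ∑ S ∈ Finset.powersetCard k (Finset.univ : Finset (Fin n)),
        (C.filter (fun c => (∑ t ∈ S, c t) = 1)).card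
      = C.card * Pminus k n w := by
  classical
  have hswap : ∑ S ∈ Finset.powersetCard k (Finset.univ : Finset (Fin n)),
      (C.filter (fun c => (∑ t ∈ S, c t) = 1)).card
    = ∑ c ∈ C, (((Finset.univ : Finset (Fin n)).powersetCard k).filter
        (fun S => (∑ t ∈ S, c t) = 1)).card := by
    simp only [Finset.card_filter]
    rw [Finset.sum_comm]
  rw [hswap, Finset.sum_congr rfl (fun c hc => per_codeword n w k c (hcode.1 c hc)),
    Finset.sum_const, smul_eq_mul]
end
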